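/- arXiv:1206.5213 — 5 statements merged into one kernel-verified Lean document; each statement's English description precedes it below -/
import Mathlib

section
/- For every prime p and nonzero integer j, Φ((p^j)₋) = Φ(p^j) / p, where (p^j)₋ is the largest nonzero prime power strictly less than p^j and Φ(x) = ∏_q q^{[[log_q x]]}. -/
noncomputable section

/-- The modified integer part `[[t]]`: `⌊t⌋` if `t ≥ 0` and `⌊t⌋ + 1` if `t < 0`. -/
def bb (t : ℝ) : ℤ := if 0 ≤ t then ⌊t⌋ else ⌊t⌋ + 1

/-- `Φ(x) = ∏_p p^{[[log_p x]]}`, the product running over all primes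
(all but finitely many factors equal `1`). -/
def Phi (x : ℝ) : ℝ := ∏ᶠ p : Nat.Primes, (p : ℝ) ^ bb (Real.logb p x)

/-- The set `P` of nonzero integer powers of primes. -/
def Pset : Set ℝ := {r | ∃ (p : ℕ) (j : ℤ), p.Prime ∧ j ≠ 0 ∧ r = (p : ℝ) ^ j}

/-- `n₊`: the next element of `P` after `n`. -/
def nplus (n : ℝ) : ℝ := sInf {m | m ∈ Pset ∧ n < m}

/-- `n₋`: the previous element of `P` before `n`. -/
def nminus (n : ℝ) : ℝ := sSup {m | m ∈ Pset ∧ m < n}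

end

open Real

lemma bb_intCast (i : ℤ) : bb (i : ℝ) = if 0 ≤ i then i else i + 1 := by
  simp only [bb, Int.floor_intCast, Int.cast_nonneg_iff]

lemma bb_logb_eq_of_one_le {b x : ℝ} (hb : 1 < b) (hx : 1 ≤ x) {i : ℤ}
    (h1 : b ^ i ≤ x) (h2 : x < b ^ (i + 1)) : bb (Real.logb b x) = i := by
  have hx0 : (0:ℝ) < x := lt_of_lt_of_le one_pos hx
  have hl : 0 ≤ Real.logb b x := Real.logb_nonneg hb hx
  have e1 : (i : ℝ) ≤ Real.logb b x := by
    rw [Real.le_logb_iff_rpow_le hb hx0, Real.rpow_intCast]; exact h1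
  have e2 : Real.logb b x < ((i + 1 : ℤ) : ℝ) := by
    rw [Real.logb_lt_iff_lt_rpow hb hx0, Real.rpow_intCast]; exact h2
  rw [bb, if_pos hl]
  refine Int.floor_eq_iff.mpr ⟨e1, ?_⟩
  push_cast at e2 ⊢; linarith

lemma bb_logb_eq_of_lt_one {b x : ℝ} (hb : 1 < b) (hx0 : 0 < x) (hx : x < 1) {i : ℤ}
    (h1 : b ^ (i - 1) ≤ x) (h2 : x < b ^ i) : bb (Real.logb b x) = i := by
  have hl : Real.logb b x < 0 := Real.logb_neg hb hx0 hx
  have e1 : ((i - 1 : ℤ) : ℝ) ≤ Real.logb b x := by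
    rw [Real.le_logb_iff_rpow_le hb hx0, Real.rpow_intCast]; exact h1
  have e2 : Real.logb b x < ((i : ℤ) : ℝ) := by
    rw [Real.logb_lt_iff_lt_rpow hb hx0, Real.rpow_intCast]; exact h2
  rw [bb, if_neg (not_le.mpr hl)]
  have hfl : ⌊Real.logb b x⌋ = i - 1 := by
    refine Int.floor_eq_iff.mpr ⟨e1, ?_⟩
    push_cast at e2 ⊢; linarith
  omega

/-- If there is no nonzero power of `b` in `(a, c]`, then `bb (logb b ·)` agrees at `a` and `c`. -/
lemma bb_eq_bb {b a c : ℝ} (hb : 1 < b) (ha : 0 < a) (hac : a ≤ c)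
    (h : ∀ i : ℤ, i ≠ 0 → ¬(a < b ^ i ∧ b ^ i ≤ c)) :
    bb (Real.logb b a) = bb (Real.logb b c) := by
  have hc0 : 0 < c := lt_of_lt_of_le ha hac
  rcases le_or_gt 1 a with h1a | h1a
  · have h1c : 1 ≤ c := le_trans h1a hac
    set i := ⌊Real.logb b a⌋ with hi
    have hi0 : 0 ≤ i := Int.floor_nonneg.mpr (Real.logb_nonneg hb h1a)
    have hba : b ^ i ≤ a := by
      rw [← Real.rpow_intCast]
      exact (Real.le_logb_iff_rpow_le hb ha).mp (Int.floor_le _)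
    have hab : a < b ^ (i + 1) := by
      rw [← Real.rpow_intCast]
      refine (Real.logb_lt_iff_lt_rpow hb ha).mp ?_
      push_cast
      exact Int.lt_floor_add_one _
    have hcb : c < b ^ (i + 1) := by
      by_contra hcon
      exact h (i + 1) (by omega) ⟨hab, not_lt.mp hcon⟩
    rw [bb_logb_eq_of_one_le hb h1a hba hab,
      bb_logb_eq_of_one_le hb h1c (le_trans hba hac) hcb]
  rcases le_or_gt 1 c with h1c | h1c
  · -- a < 1 ≤ c : both equal 0
    have hb0 : b ^ (0:ℤ) ≤ c := by rw [zpow_zero]; exact h1c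
    have hcb : c < b ^ (0 + 1 : ℤ) := by
      by_contra hcon
      refine h 1 one_ne_zero ⟨?_, ?_⟩
      · rw [zpow_one]; exact lt_of_lt_of_le h1a hb.le
      · rw [← zero_add (1:ℤ)]; exact not_lt.mp hcon
    have hba : b ^ ((0:ℤ) - 1) ≤ a := by
      by_contra hcon
      refine h (-1) (by omega) ⟨?_, ?_⟩
      · rw [show (-1 : ℤ) = 0 - 1 by ring]; exact not_le.mp hcon
      · calc b ^ (-1 : ℤ) ≤ b ^ (0 : ℤ) := zpow_le_zpow_right₀ hb.le (by omega)
          _ = 1 := zpow_zero b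
          _ ≤ c := h1c
    have hab : a < b ^ (0:ℤ) := by rw [zpow_zero]; exact h1a
    rw [bb_logb_eq_of_lt_one hb ha h1a hba hab,
      bb_logb_eq_of_one_le hb h1c hb0 hcb]
  · -- a ≤ c < 1
    set i := ⌊Real.logb b c⌋ + 1 with hi
    have hi0 : i ≤ 0 := by
      have : ¬ (0 ≤ ⌊Real.logb b c⌋) := by
        rw [Int.floor_nonneg]
        exact not_le.mpr (Real.logb_neg hb hc0 h1c)
      omega
    have hir : (i:ℝ) = (⌊Real.logb b c⌋ : ℝ) + 1 := by rw [hi]; push_cast; ring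
    have hcb : b ^ (i - 1) ≤ c := by
      rw [← Real.rpow_intCast]
      refine (Real.le_logb_iff_rpow_le hb hc0).mp ?_
      push_cast
      have := Int.floor_le (Real.logb b c)
      linarith
    have hbc : c < b ^ i := by
      rw [← Real.rpow_intCast]
      refine (Real.logb_lt_iff_lt_rpow hb hc0).mp ?_
      push_cast
      have := Int.lt_floor_add_one (Real.logb b c)
      linarith
    have hba : b ^ (i - 1) ≤ a := by
      by_contra hcon
      exact h (i - 1) (by omega) ⟨not_le.mp hcon, hcb⟩
    rw [bb_logb_eq_of_lt_one hb ha h1a hba (lt_of_le_of_lt hac hbc),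
      bb_logb_eq_of_lt_one hb hc0 h1c hcb hbc]

lemma Pset_pos {x : ℝ} (hx : x ∈ Pset) : 0 < x := by
  obtain ⟨q, k, hq, -, rfl⟩ := hx
  exact zpow_pos (by exact_mod_cast hq.pos) k

lemma prime_eq_of_zpow_eq_pos {p q : ℕ} {j i : ℤ} (hp : p.Prime) (hq : q.Prime)
    (hj : 0 < j) (hi : i ≠ 0) (h : (p:ℝ) ^ j = (q:ℝ) ^ i) : p = q := by
  have hp1 : (1:ℝ) < p := by exact_mod_cast hp.one_lt
  have hq1 : (1:ℝ) < q := by exact_mod_cast hq.one_lt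
  have hgt : (1:ℝ) < (q:ℝ) ^ i := h ▸ one_lt_zpow₀ hp1 hj
  have hipos : 0 < i := by
    by_contra hcon
    have : (q:ℝ) ^ i ≤ 1 := by
      calc (q:ℝ) ^ i ≤ (q:ℝ) ^ (0:ℤ) := zpow_le_zpow_right₀ hq1.le (by omega)
        _ = 1 := zpow_zero _
    linarith
  have hnat : p ^ j.toNat = q ^ i.toNat := by
    have h' : ((p ^ j.toNat : ℕ) : ℝ) = ((q ^ i.toNat : ℕ) : ℝ) := by
      push_cast
      rw [← zpow_natCast (p:ℝ), ← zpow_natCast (q:ℝ), Int.toNat_of_nonneg hj.le,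
        Int.toNat_of_nonneg hipos.le]
      exact h
    exact_mod_cast h'
  have hd : p ∣ q ^ i.toNat := hnat ▸ dvd_pow_self p (by omega : j.toNat ≠ 0)
  exact (Nat.prime_dvd_prime_iff_eq hp hq).mp (hp.dvd_of_dvd_pow hd)

lemma prime_eq_of_zpow_eq {p q : ℕ} {j i : ℤ} (hp : p.Prime) (hq : q.Prime)
    (hj : j ≠ 0) (hi : i ≠ 0) (h : (p:ℝ) ^ j = (q:ℝ) ^ i) : p = q := by
  rcases lt_or_gt_of_ne hj with hneg | hpos
  · have h' : (p:ℝ) ^ (-j) = (q:ℝ) ^ (-i) := by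
      rw [zpow_neg, zpow_neg, h]
    exact prime_eq_of_zpow_eq_pos hp hq (by omega) (by omega) h'
  · exact prime_eq_of_zpow_eq_pos hp hq hpos hi h

lemma aux_bound {q : ℕ} (hq : 2 ≤ q) {k : ℤ} (hk : 0 < k) {M : ℕ}
    (h : (q:ℝ) ^ k ≤ M) : q ≤ M ∧ k ≤ (M:ℤ) := by
  have hq1 : (1:ℝ) ≤ q := by exact_mod_cast Nat.one_le_of_lt hq
  have hqM : (q:ℝ) ≤ M := by
    calc (q:ℝ) = (q:ℝ) ^ (1:ℤ) := (zpow_one _).symm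
      _ ≤ (q:ℝ) ^ k := zpow_le_zpow_right₀ hq1 hk
      _ ≤ M := h
  constructor
  · exact_mod_cast hqM
  · set m := k.toNat with hm
    have hkm : k = (m : ℤ) := (Int.toNat_of_nonneg hk.le).symm
    have h2m : (m:ℝ) < 2 ^ m := by exact_mod_cast Nat.lt_two_pow_self (n := m)
    have h2q : (2:ℝ) ^ m ≤ (q:ℝ) ^ m := by
      refine pow_le_pow_left₀ (by norm_num) ?_ m
      exact_mod_cast hq
    have hqk : (q:ℝ) ^ m = (q:ℝ) ^ k := by
      rw [hkm, zpow_natCast]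
    have : (m:ℝ) ≤ M := by
      rw [← hqk] at h
      linarith
    have : m ≤ M := by exact_mod_cast this
    omega

lemma Pset_inter_finite (a c : ℝ) (ha : 0 < a) : {x | x ∈ Pset ∧ a ≤ x ∧ x ≤ c}.Finite := by
  obtain ⟨M₁, h₁⟩ := exists_nat_ge c
  obtain ⟨M₂, h₂⟩ := exists_nat_ge a⁻¹
  set M := max M₁ M₂ with hM
  have hM1 : c ≤ M := le_trans h₁ (by exact_mod_cast le_max_left M₁ M₂)
  have hM2 : a⁻¹ ≤ M := le_trans h₂ (by exact_mod_cast le_max_right M₁ M₂)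
  apply Set.Finite.subset
    ((Set.toFinite ((Finset.Iic M ×ˢ Finset.Icc (-(M:ℤ)) (M:ℤ) : Finset (ℕ × ℤ)) : Set (ℕ × ℤ))).image
      (fun z : ℕ × ℤ => (z.1 : ℝ) ^ z.2))
  rintro x ⟨⟨q, k, hq, hk, rfl⟩, hax, hxc⟩
  refine ⟨(q, k), ?_, rfl⟩
  have hq2 : 2 ≤ q := hq.two_le
  have hq0 : (0:ℝ) < q := by exact_mod_cast hq.pos
  simp only [Finset.coe_product, Set.mem_prod, Finset.mem_coe, Finset.mem_Iic, Finset.mem_Icc]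
  rcases lt_or_gt_of_ne hk with hneg | hpos
  · have hinv : (q:ℝ) ^ (-k) ≤ M := by
      rw [zpow_neg]
      calc ((q:ℝ) ^ k)⁻¹ ≤ a⁻¹ := by
            exact inv_anti₀ ha hax
        _ ≤ M := hM2
    obtain ⟨hqM, hkM⟩ := aux_bound hq2 (by omega) hinv
    exact ⟨hqM, by omega, by omega⟩
  · have hpow : (q:ℝ) ^ k ≤ M := le_trans hxc hM1
    obtain ⟨hqM, hkM⟩ := aux_bound hq2 hpos hpow
    exact ⟨hqM, by omega, by omega⟩

lemma nminus_spec {n m₀ : ℝ} (hm₀ : m₀ ∈ Pset) (hlt : m₀ < n) :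
    nminus n ∈ Pset ∧ nminus n < n ∧ ∀ m ∈ Pset, m < n → m ≤ nminus n := by
  set S := {m | m ∈ Pset ∧ m < n} with hS
  have hbdd : BddAbove S := ⟨n, fun x hx => le_of_lt hx.2⟩
  have hm₀S : m₀ ∈ S := ⟨hm₀, hlt⟩
  set S' := {m ∈ S | m₀ ≤ m} with hS'
  have hS'fin : S'.Finite := by
    apply (Pset_inter_finite m₀ n (Pset_pos hm₀)).subset
    rintro x ⟨⟨hx1, hx2⟩, hx3⟩
    exact ⟨hx1, hx3, le_of_lt hx2⟩
  have hS'ne : S'.Nonempty := ⟨m₀, hm₀S, le_refl _⟩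
  have heq : sSup S = sSup S' := by
    refine csSup_eq_csSup_of_forall_exists_le ?_ ?_
    · intro x hx
      by_cases h : m₀ ≤ x
      · exact ⟨x, ⟨hx, h⟩, le_refl x⟩
      · exact ⟨m₀, ⟨hm₀S, le_refl m₀⟩, le_of_not_ge h⟩
    · intro y hy
      exact ⟨y, hy.1, le_refl y⟩
  have hmem : sSup S' ∈ S' := hS'ne.csSup_mem hS'fin
  have hnm : nminus n = sSup S' := heq
  refine ⟨?_, ?_, ?_⟩
  · rw [hnm]; exact hmem.1.1
  · rw [hnm]; exact hmem.1.2
  · intro m hm hmn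
    exact le_csSup hbdd ⟨hm, hmn⟩

lemma Phi_support_finite {x : ℝ} (hx : 0 < x) :
    (Function.mulSupport fun q : Nat.Primes => (q : ℝ) ^ bb (Real.logb q x)).Finite := by
  obtain ⟨M₁, h₁⟩ := exists_nat_ge x
  obtain ⟨M₂, h₂⟩ := exists_nat_ge x⁻¹
  set M := max M₁ M₂ with hM
  have hM1 : x ≤ M := le_trans h₁ (by exact_mod_cast le_max_left M₁ M₂)
  have hM2 : x⁻¹ ≤ M := le_trans h₂ (by exact_mod_cast le_max_right M₁ M₂)
  have hsub : (Function.mulSupport fun q : Nat.Primes => (q : ℝ) ^ bb (Real.logb q x)) ⊆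
      (fun q : Nat.Primes => (q : ℕ)) ⁻¹' (Set.Iic M) := by
    intro q hq
    simp only [Set.mem_preimage, Set.mem_Iic]
    by_contra hcon
    have hq1 : (1:ℝ) < (q:ℕ) := by exact_mod_cast q.2.one_lt
    have hMq : ((M:ℕ):ℝ) < ((q:ℕ):ℝ) := by exact_mod_cast not_le.mp hcon
    have h1 : x < ((q:ℕ):ℝ) := lt_of_le_of_lt hM1 hMq
    have h2 : (((q:ℕ):ℝ))⁻¹ < x := by
      have : x⁻¹ < ((q:ℕ):ℝ) := lt_of_le_of_lt hM2 hMq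
      have h' := inv_strictAnti₀ (inv_pos.mpr hx) this
      rwa [inv_inv] at h'
    have hbb : bb (Real.logb (q:ℕ) x) = 0 := by
      rcases le_or_gt 1 x with h | h
      · refine bb_logb_eq_of_one_le hq1 h ?_ ?_
        · rw [zpow_zero]; exact h
        · rw [zero_add, zpow_one]; exact h1
      · refine bb_logb_eq_of_lt_one hq1 hx h ?_ ?_
        · rw [zero_sub, zpow_neg, zpow_one]; exact h2.le
        · rw [zpow_zero]; exact h
    apply hq
    simp only [hbb, zpow_zero]
  exact ((Set.finite_Iic M).preimage (Set.injOn_of_injective Nat.Primes.coe_nat_injective)).subset hsub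

/-- For every prime `p` and nonzero integer `j`, `Phi ((p^j)₋) = Phi (p^j) / p`. -/
theorem stmt_3 (p : ℕ) (j : ℤ) (hp : p.Prime) (hj : j ≠ 0) :
    Phi (nminus ((p : ℝ) ^ j)) = Phi ((p : ℝ) ^ j) / p := by
  have hp1 : (1:ℝ) < p := by exact_mod_cast hp.one_lt
  have hp0 : (0:ℝ) < p := lt_trans one_pos hp1
  set n : ℝ := (p:ℝ) ^ j with hn
  set j' : ℤ := if j = 1 then -1 else j - 1 with hj'def
  have hj'0 : j' ≠ 0 := by rw [hj'def]; split_ifs <;> omega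
  have hj'j : j' < j := by rw [hj'def]; split_ifs <;> omega
  set m₀ : ℝ := (p:ℝ) ^ j' with hm₀def
  have hm₀P : m₀ ∈ Pset := ⟨p, j', hp, hj'0, rfl⟩
  have hm₀n : m₀ < n := zpow_lt_zpow_right₀ hp1 hj'j
  obtain ⟨hyP, hylt, hyub⟩ := nminus_spec hm₀P hm₀n
  set y := nminus n with hydef
  have hy0 : 0 < y := Pset_pos hyP
  have hm₀y : m₀ ≤ y := hyub m₀ hm₀P hm₀n
  set p' : Nat.Primes := ⟨p, hp⟩ with hp'def
  have hcoe : ((p' : ℕ) : ℝ) = (p : ℝ) := rfl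
  have hlogp : ∀ i : ℤ, Real.logb p ((p:ℝ) ^ i) = i := by
    intro i
    rw [← Real.rpow_intCast, Real.logb_rpow hp0 hp1.ne']
  have hkey : ∀ q : Nat.Primes,
      bb (Real.logb q n) = bb (Real.logb q y) + (if q = p' then 1 else 0) := by
    intro q
    by_cases hq : q = p'
    · subst hq
      rw [if_pos rfl]
      have h1 : bb (Real.logb p y) = bb (Real.logb p m₀) := by
        refine (bb_eq_bb hp1 (Pset_pos hm₀P) hm₀y ?_).symm
        intro i hi ⟨hlo, hhi⟩
        have hij : i < j := by
          have : (p:ℝ) ^ i < (p:ℝ) ^ j := lt_of_le_of_lt hhi hylt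
          exact (zpow_lt_zpow_iff_right₀ hp1).mp this
        have hji : j' < i := (zpow_lt_zpow_iff_right₀ hp1).mp hlo
        rw [hj'def] at hji
        by_cases h1 : j = 1
        · subst h1; simp at hji; omega
        · rw [if_neg h1] at hji; omega
      rw [show (Real.logb (p' : ℕ) n) = Real.logb p n from rfl,
        show (Real.logb (p' : ℕ) y) = Real.logb p y from rfl]
      rw [h1, hm₀def, hn, hlogp, hlogp, bb_intCast, bb_intCast, hj'def]
      split_ifs <;> omega
    · rw [if_neg hq, add_zero]
      have hq1 : (1:ℝ) < (q:ℕ) := by exact_mod_cast q.2.one_lt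
      refine (bb_eq_bb hq1 hy0 hylt.le ?_).symm
      intro i hi ⟨hlo, hhi⟩
      rcases lt_or_eq_of_le hhi with hlt | heq
      · exact absurd (hyub _ ⟨q, i, q.2, hi, rfl⟩ hlt) (not_le.mpr hlo)
      · have hqp : (q:ℕ) = p := prime_eq_of_zpow_eq q.2 hp hi hj (by rw [heq, hn])
        exact hq (Nat.Primes.coe_nat_injective hqp)
  have hfin_y := Phi_support_finite hy0
  have hfin_ind : (Function.mulSupport fun q : Nat.Primes =>
      if q = p' then ((q:ℕ):ℝ) else 1).Finite := by
    apply (Set.finite_singleton p').subset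
    intro q hq
    simp only [Set.mem_singleton_iff]
    by_contra h
    exact hq (if_neg h)
  have hPhin : Phi n = Phi y * p := by
    rw [Phi, Phi]
    have hterm : ∀ q : Nat.Primes, ((q:ℕ):ℝ) ^ bb (Real.logb (q:ℕ) n) =
        (((q:ℕ):ℝ) ^ bb (Real.logb (q:ℕ) y)) * (if q = p' then ((q:ℕ):ℝ) else 1) := by
      intro q
      have hq0 : ((q:ℕ):ℝ) ≠ 0 := by
        have := q.2.pos
        positivity
      rw [hkey q]
      by_cases hq : q = p'
      · rw [if_pos hq, if_pos hq, zpow_add₀ hq0, zpow_one]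
      · rw [if_neg hq, if_neg hq, add_zero, mul_one]
    rw [finprod_congr hterm, finprod_mul_distrib hfin_y hfin_ind,
      finprod_eq_single _ p' (fun q hq => if_neg hq), if_pos rfl, hcoe]
  rw [hydef] at hPhin ⊢
  rw [hPhin, mul_div_assoc, div_self (ne_of_gt hp0), mul_one]
end

section
/- The range of the function ‖·‖ : 𝔸_f → ℝ (defined by ‖x‖ = sup_p |x_p|_p/p if x ∈ ∏_p ℤ_p and ‖x‖ = sup_p |x_p|_p otherwise) is exactly {0} ∪ { p^j : p prime, j ∈ ℤ \ {0} }. In particular, ‖x‖ never equals 1. -/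
open Filter MeasureTheory
open scoped Classical

noncomputable section

instance (p : Nat.Primes) : Fact (p.1.Prime) := ⟨p.2⟩

/-- The finite adele ring of `ℚ`, realized as the restricted product of the
fields `ℚ_[p]` with respect to the rings `ℤ_[p]`. -/
def adeleSubring : Subring (Π p : Nat.Primes, ℚ_[p.1]) where
  carrier := {x | ∀ᶠ p : Nat.Primes in Filter.cofinite, ‖x p‖ ≤ 1}
  zero_mem' := by
    show ∀ᶠ p : Nat.Primes in Filter.cofinite, ‖(0 : Π p : Nat.Primes, ℚ_[p.1]) p‖ ≤ 1
    exact Filter.Eventually.of_forall fun p => by simp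
  one_mem' := by
    show ∀ᶠ p : Nat.Primes in Filter.cofinite, ‖(1 : Π p : Nat.Primes, ℚ_[p.1]) p‖ ≤ 1
    exact Filter.Eventually.of_forall fun p => by simp
  add_mem' := by
    intro a b ha hb
    show ∀ᶠ p : Nat.Primes in Filter.cofinite, ‖(a + b) p‖ ≤ 1
    filter_upwards [ha, hb] with p hpa hpb
    exact le_trans (Padic.nonarchimedean _ _) (max_le hpa hpb)
  neg_mem' := by
    intro a ha
    show ∀ᶠ p : Nat.Primes in Filter.cofinite, ‖(-a) p‖ ≤ 1
    filter_upwards [ha] with p hp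
    simpa using hp
  mul_mem' := by
    intro a b ha hb
    show ∀ᶠ p : Nat.Primes in Filter.cofinite, ‖(a * b) p‖ ≤ 1
    filter_upwards [ha, hb] with p hpa hpb
    have h : ‖(a * b) p‖ = ‖a p‖ * ‖b p‖ := norm_mul _ _
    rw [h]
    nlinarith [norm_nonneg (a p), norm_nonneg (b p)]

/-- The finite adele ring `𝔸_f` as a type. -/
abbrev FA : Type := ↥adeleSubring

/-- `‖x‖₁ = sup_p |x_p|_p`. -/
def norm1 (x : FA) : ℝ := ⨆ p : Nat.Primes, ‖x.1 p‖

/-- `‖x‖₀ = sup_p |x_p|_p / p`. -/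
def norm0 (x : FA) : ℝ := ⨆ p : Nat.Primes, ‖x.1 p‖ / p

/-- The adelic norm `‖x‖`. -/
def anorm (x : FA) : ℝ := if ∀ p, ‖x.1 p‖ ≤ 1 then norm0 x else norm1 x

/-- The restricted product topology on `𝔸_f`. -/
def restrictedTop : TopologicalSpace FA :=
  TopologicalSpace.generateFrom
    { B | ∃ (S : Finset Nat.Primes) (U : Π p : Nat.Primes, Set ℚ_[p.1]),
        (∀ p, IsOpen (U p)) ∧
        B = {x : FA | (∀ p ∈ S, x.1 p ∈ U p) ∧ ∀ p ∉ S, ‖x.1 p‖ ≤ 1} }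

end


noncomputable section AnormProofs

instance : Nonempty Nat.Primes := ⟨⟨2, Nat.prime_two⟩⟩

lemma my_ciSup_eq_of_max {f : Nat.Primes → ℝ} {p0 : Nat.Primes} (h : ∀ q, f q ≤ f p0) :
    (⨆ p, f p) = f p0 :=
  le_antisymm (ciSup_le h) (le_ciSup ⟨f p0, by rintro _ ⟨q, rfl⟩; exact h q⟩ p0)

lemma my_sup_attained {f : Nat.Primes → ℝ} {T : Finset Nat.Primes} {p0 : Nat.Primes}
    (hp0 : p0 ∈ T) (h : ∀ q ∉ T, f q ≤ f p0) :
    ∃ q ∈ T, (⨆ p, f p) = f q ∧ ∀ p, f p ≤ f q := by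
  obtain ⟨q, hq, hmax⟩ := T.exists_mem_eq_sup' ⟨p0, hp0⟩ f
  have hub : ∀ p, f p ≤ f q := by
    intro p
    by_cases hp : p ∈ T
    · rw [← hmax]; exact Finset.le_sup' f hp
    · exact (h p hp).trans (by rw [← hmax]; exact Finset.le_sup' f hp0)
  exact ⟨q, hq, my_ciSup_eq_of_max hub, hub⟩

lemma my_small_finite (C : ℝ) : {q : Nat.Primes | (q : ℝ) ≤ C}.Finite := by
  have hsub : {q : Nat.Primes | (q : ℝ) ≤ C} ⊆
      (fun q : Nat.Primes => (q : ℕ)) ⁻¹' (Set.Iic ⌈C⌉₊) := by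
    intro q hq
    simp only [Set.mem_preimage, Set.mem_Iic]
    exact_mod_cast (hq.trans (Nat.le_ceil C))
  exact ((Set.finite_Iic _).preimage Nat.Primes.coe_nat_injective.injOn).subset hsub

lemma my_bad_finite (x : FA) : {p : Nat.Primes | 1 < ‖x.1 p‖}.Finite := by
  have h : ∀ᶠ p : Nat.Primes in Filter.cofinite, ‖x.1 p‖ ≤ 1 := x.2
  have := Filter.eventually_cofinite.mp h
  simpa only [not_le] using this

lemma my_one_lt_cast (p : Nat.Primes) : (1 : ℝ) < (p : ℝ) := by
  exact_mod_cast p.2.one_lt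

lemma my_case2 (x : FA) (h : ¬ ∀ p, ‖x.1 p‖ ≤ 1) : anorm x ∈ Pset ∧ 1 < anorm x := by
  push_neg at h
  obtain ⟨p0, hp0⟩ := h
  have hT : p0 ∈ (my_bad_finite x).toFinset := by
    simp only [Set.Finite.mem_toFinset, Set.mem_setOf_eq]; exact hp0
  have hout : ∀ q ∉ (my_bad_finite x).toFinset, ‖x.1 q‖ ≤ ‖x.1 p0‖ := by
    intro q hq
    simp only [Set.Finite.mem_toFinset, Set.mem_setOf_eq, not_lt] at hq
    exact hq.trans hp0.le
  obtain ⟨q, hqT, hsup, hub⟩ := my_sup_attained hT hout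
  simp only [Set.Finite.mem_toFinset, Set.mem_setOf_eq] at hqT
  have hxq : x.1 q ≠ 0 := by
    intro h0; rw [h0, norm_zero] at hqT; linarith
  have ha : anorm x = ‖x.1 q‖ := by
    rw [anorm, if_neg (by push_neg; exact ⟨p0, hp0⟩), norm1, hsup]
  obtain ⟨j, hj⟩ : ∃ j : ℤ, ‖x.1 q‖ = (q : ℝ) ^ j := ⟨-(x.1 q).valuation, Padic.norm_eq_zpow_neg_valuation hxq⟩
  have hj0 : 0 < j := by
    by_contra hc
    push_neg at hc
    have := zpow_le_one_of_nonpos₀ (my_one_lt_cast q).le hc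
    rw [← hj] at this; linarith
  constructor
  · exact ⟨q, j, q.2, hj0.ne', by rw [ha, hj]⟩
  · rw [ha]; exact hqT

lemma my_case1 (x : FA) (h : ∀ p, ‖x.1 p‖ ≤ 1) :
    anorm x ∈ insert (0 : ℝ) Pset ∧ anorm x ≤ 2⁻¹ := by
  have ha : anorm x = norm0 x := if_pos h
  by_cases hx : x = 0
  · have h0 : anorm x = 0 := by
      rw [ha, norm0, hx]
      have : ∀ p : Nat.Primes, ‖(0 : FA).1 p‖ / (p : ℝ) = 0 := by
        intro p; simp
      simp only [this, ciSup_const]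
    rw [h0]
    exact ⟨Set.mem_insert _ _, by norm_num⟩
  · set f : Nat.Primes → ℝ := fun p => ‖x.1 p‖ / p with hf
    obtain ⟨p0, hp0⟩ : ∃ p, x.1 p ≠ 0 := by
      by_contra hc
      push_neg at hc
      exact hx (Subtype.ext (funext hc))
    have hppos : ∀ p : Nat.Primes, (0:ℝ) < p := fun p => by
      have := my_one_lt_cast p; linarith
    have hp0pos : 0 < f p0 := div_pos (norm_pos_iff.mpr hp0) (hppos p0)
    have hT : p0 ∈ (my_small_finite (1 / f p0)).toFinset := by
      simp only [Set.Finite.mem_toFinset, Set.mem_setOf_eq]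
      rw [le_div_iff₀ hp0pos]
      have h1 : f p0 * (p0 : ℝ) = ‖x.1 p0‖ := div_mul_cancel₀ _ (hppos p0).ne'
      calc (p0:ℝ) * f p0 = f p0 * p0 := mul_comm _ _
        _ = ‖x.1 p0‖ := h1
        _ ≤ 1 := h p0
    have hout : ∀ q ∉ (my_small_finite (1 / f p0)).toFinset, f q ≤ f p0 := by
      intro q hq
      simp only [Set.Finite.mem_toFinset, Set.mem_setOf_eq, not_le] at hq
      have h1 : 1 < (q:ℝ) * f p0 := by
        rw [div_lt_iff₀ hp0pos] at hq; linarith [mul_comm (q:ℝ) (f p0)]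
      have h2 : 1 / (q:ℝ) < f p0 := by
        rw [div_lt_iff₀ (hppos q)]; linarith [mul_comm (q:ℝ) (f p0)]
      have h3 : f q ≤ 1 / q := by
        rw [hf]; simp only; gcongr <;> first | exact h q | exact (hppos q).le
      linarith
    obtain ⟨q, hqT, hsup, hub⟩ := my_sup_attained hT hout
    have hfq_pos : 0 < f q := lt_of_lt_of_le hp0pos (hub p0)
    have hxq : x.1 q ≠ 0 := by
      intro h0
      rw [hf] at hfq_pos
      simp only [h0, norm_zero, zero_div] at hfq_pos
      exact lt_irrefl _ hfq_pos
    obtain ⟨j, hj⟩ : ∃ j : ℤ, ‖x.1 q‖ = (q : ℝ) ^ j :=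
      ⟨-(x.1 q).valuation, Padic.norm_eq_zpow_neg_valuation hxq⟩
    have hj0 : j ≤ 0 := by
      by_contra hc
      push_neg at hc
      have := one_lt_zpow₀ (my_one_lt_cast q) hc
      rw [← hj] at this
      linarith [h q]
    have hval : f q = (q : ℝ) ^ (j - 1) := by
      rw [hf]
      simp only
      rw [hj, zpow_sub_one₀ (hppos q).ne', div_eq_mul_inv]
    have hanorm : anorm x = (q : ℝ) ^ (j - 1) := by
      rw [ha, norm0, ← hval]; exact hsup
    constructor
    · exact Set.mem_insert_of_mem _ ⟨q, j - 1, q.2, by omega, hanorm⟩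
    · rw [hanorm, ← hval]
      have h2q : (2:ℝ) ≤ q := by exact_mod_cast q.2.two_le
      calc f q ≤ 1 / q := by
            rw [hf]; simp only; gcongr <;> first | exact h q | exact (hppos q).le
        _ ≤ 2⁻¹ := by rw [one_div]; exact inv_anti₀ (by norm_num) h2q


noncomputable def mySingle (pp : Nat.Primes) (c : ℚ_[pp.1]) : FA :=
  ⟨Pi.single pp c, by
    show ∀ᶠ q : Nat.Primes in Filter.cofinite, ‖(Pi.single pp c : Π q : Nat.Primes, ℚ_[q.1]) q‖ ≤ 1
    filter_upwards [Filter.eventually_cofinite_ne pp] with q hq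
    rw [Pi.single_eq_of_ne hq]
    simp⟩

lemma my_mem_range (p : ℕ) (j : ℤ) (hp : p.Prime) (hj : j ≠ 0) :
    ∃ x : FA, anorm x = (p : ℝ) ^ j := by
  haveI : Fact p.Prime := ⟨hp⟩
  set pp : Nat.Primes := ⟨p, hp⟩ with hpp
  have hp1 : (1 : ℝ) < (pp : ℝ) := my_one_lt_cast pp
  have hp0 : (0 : ℝ) < (pp : ℝ) := by linarith
  rcases lt_or_gt_of_ne hj with hneg | hpos
  · -- j < 0 : use norm0
    set c : ℚ_[pp.1] := (pp.1 : ℚ_[pp.1]) ^ (-(j + 1)) with hc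
    have hnc : ‖c‖ = (pp : ℝ) ^ (j + 1) := by
      rw [hc, Padic.norm_p_zpow, neg_neg]
    refine ⟨mySingle pp c, ?_⟩
    have happ : ∀ q, (mySingle pp c).1 q = (Pi.single pp c : Π q : Nat.Primes, ℚ_[q.1]) q :=
      fun q => rfl
    have hall : ∀ q, ‖(mySingle pp c).1 q‖ ≤ 1 := by
      intro q
      rw [happ]
      by_cases hq : q = pp
      · subst hq
        rw [Pi.single_eq_same, hnc]
        exact zpow_le_one_of_nonpos₀ hp1.le (by omega)
      · rw [Pi.single_eq_of_ne hq]; simp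
    rw [anorm, if_pos hall, norm0]
    have hmax : ∀ q : Nat.Primes, ‖(mySingle pp c).1 q‖ / q ≤ ‖(mySingle pp c).1 pp‖ / pp := by
      intro q
      by_cases hq : q = pp
      · subst hq; exact le_refl _
      · rw [happ, Pi.single_eq_of_ne hq, norm_zero, zero_div]
        positivity
    rw [my_ciSup_eq_of_max hmax, happ, Pi.single_eq_same, hnc]
    rw [zpow_add_one₀ hp0.ne' j]
    have : ((pp : ℕ) : ℝ) = (p : ℝ) := rfl
    rw [this]
    exact mul_div_cancel_right₀ _ (by rw [← this]; exact hp0.ne')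
  · -- j > 0 : use norm1
    set c : ℚ_[pp.1] := (pp.1 : ℚ_[pp.1]) ^ (-j) with hc
    have hnc : ‖c‖ = (pp : ℝ) ^ j := by
      rw [hc, Padic.norm_p_zpow, neg_neg]
    refine ⟨mySingle pp c, ?_⟩
    have happ : ∀ q, (mySingle pp c).1 q = (Pi.single pp c : Π q : Nat.Primes, ℚ_[q.1]) q :=
      fun q => rfl
    have hgt : 1 < ‖(mySingle pp c).1 pp‖ := by
      rw [happ, Pi.single_eq_same, hnc]
      exact one_lt_zpow₀ hp1 hpos
    rw [anorm, if_neg (by push_neg; exact ⟨pp, hgt⟩), norm1]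
    have hmax : ∀ q : Nat.Primes, ‖(mySingle pp c).1 q‖ ≤ ‖(mySingle pp c).1 pp‖ := by
      intro q
      by_cases hq : q = pp
      · subst hq; exact le_refl _
      · rw [happ, Pi.single_eq_of_ne hq, norm_zero]
        positivity
    rw [my_ciSup_eq_of_max hmax, happ, Pi.single_eq_same, hnc]

lemma my_anorm_zero : anorm (0 : FA) = 0 := by
  rw [anorm, if_pos (fun p => by simp), norm0]
  have h : ∀ p : Nat.Primes, ‖(0 : FA).1 p‖ / (p : ℝ) = 0 := fun p => by simp
  simp only [h, ciSup_const]

/-- The range of the adelic norm is exactly `{0} ∪ {p^j : p prime, j ∈ ℤ \\ {0}}`;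
in particular it never takes the value `1`. -/
theorem stmt_5 :
    Set.range anorm = insert (0 : ℝ) Pset ∧ ∀ x : FA, anorm x ≠ 1 := by
  have hmain : ∀ x : FA, anorm x ∈ insert (0:ℝ) Pset ∧ anorm x ≠ 1 := by
    intro x
    by_cases h : ∀ p, ‖x.1 p‖ ≤ 1
    · obtain ⟨hm, hle⟩ := my_case1 x h
      exact ⟨hm, by intro h1; rw [h1] at hle; norm_num at hle⟩
    · obtain ⟨hm, hlt⟩ := my_case2 x h
      exact ⟨Set.mem_insert_of_mem _ hm, by intro h1; rw [h1] at hlt; exact lt_irrefl _ hlt⟩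
  refine ⟨Set.Subset.antisymm ?_ ?_, fun x => (hmain x).2⟩
  · rintro _ ⟨x, rfl⟩; exact (hmain x).1
  · intro r hr
    rcases Set.mem_insert_iff.mp hr with rfl | ⟨p, j, hp, hj, rfl⟩
    · exact ⟨0, my_anorm_zero⟩
    · obtain ⟨x, hx⟩ := my_mem_range p j hp hj
      exact ⟨x, hx⟩

end AnormProofs
end

section
/- For every x⁰ ∈ 𝔸_f and ε > 0, the closed ball B_ε(x⁰) = { x ∈ 𝔸_f : ‖x − x⁰‖ ≤ ε } equals the product ∏_p (x⁰_p + p^{-α_p(ε)} ℤ_p), where α_p(ε) = [[log_p ε]]; in particular B_ε(x⁰) is compact. -/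
open Filter MeasureTheory
open scoped Classical

noncomputable section AuxLemmas

lemma one_lt_p (p : Nat.Primes) : (1:ℝ) < (p:ℕ) := by exact_mod_cast p.2.one_lt

lemma padic_norm_le_of_le {p : ℕ} [Fact p.Prime] (y : ℚ_[p]) {c : ℝ} {k : ℤ}
    (h2 : c < (p:ℝ)^(k+1)) (hy : ‖y‖ ≤ c) : ‖y‖ ≤ (p:ℝ)^k := by
  have hp1 : (1:ℝ) < p := by exact_mod_cast (Fact.out : p.Prime).one_lt
  rcases eq_or_ne y 0 with rfl | h0
  · simpa using zpow_nonneg (by positivity) k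
  · rw [Padic.norm_eq_zpow_neg_valuation h0] at hy ⊢
    have hlt := lt_of_le_of_lt hy h2
    rw [zpow_lt_zpow_iff_right₀ hp1] at hlt
    exact zpow_le_zpow_right₀ hp1.le (by omega)

lemma padic_norm_le_one_of_lt {p : ℕ} [Fact p.Prime] (z : ℚ_[p]) (h : ‖z‖ < p) : ‖z‖ ≤ 1 := by
  have h2 : ‖z‖ < (p:ℝ) ^ ((0:ℤ)+1) := by simpa using h
  simpa using padic_norm_le_of_le z h2 le_rfl

lemma zpow_eq_rpow {q : ℝ} (hq : 0 < q) (k : ℤ) : q ^ k = q ^ (k:ℝ) := (Real.rpow_intCast q k).symm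

lemma bb_ge_one {q ε : ℝ} (hq : 1 < q) (hε : 1 ≤ ε) :
    q ^ bb (Real.logb q ε) ≤ ε ∧ ε < q ^ (bb (Real.logb q ε) + 1) ∧ 0 ≤ bb (Real.logb q ε) := by
  have hq0 : (0:ℝ) < q := lt_trans one_pos hq
  have hε0 : (0:ℝ) < ε := lt_of_lt_of_le one_pos hε
  set t := Real.logb q ε with ht
  have ht0 : 0 ≤ t := Real.logb_nonneg hq hε
  have hbb : bb t = ⌊t⌋ := if_pos ht0
  have hrt : q ^ t = ε := Real.rpow_logb hq0 hq.ne' hε0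
  refine ⟨?_, ?_, ?_⟩
  · rw [hbb, zpow_eq_rpow hq0, ← hrt]
    exact Real.rpow_le_rpow_of_exponent_le hq.le (Int.floor_le t)
  · rw [hbb, zpow_eq_rpow hq0, ← hrt]
    apply Real.rpow_lt_rpow_of_exponent_lt hq
    push_cast
    exact Int.lt_floor_add_one t
  · rw [hbb]; exact Int.floor_nonneg.mpr ht0

lemma bb_lt_one {q ε : ℝ} (hq : 1 < q) (hε : 0 < ε) (h1 : ε < 1) :
    q ^ bb (Real.logb q ε) ≤ q * ε ∧ q * ε < q ^ (bb (Real.logb q ε) + 1) ∧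
      bb (Real.logb q ε) ≤ 0 := by
  have hq0 : (0:ℝ) < q := lt_trans one_pos hq
  set t := Real.logb q ε with ht
  have ht0 : t < 0 := Real.logb_neg hq hε h1
  have hbb : bb t = ⌊t⌋ + 1 := if_neg (not_le.mpr ht0)
  have hrt : q ^ t = ε := Real.rpow_logb hq0 hq.ne' hε
  have hfl : q ^ (⌊t⌋:ℤ) ≤ ε := by
    rw [zpow_eq_rpow hq0, ← hrt]
    exact Real.rpow_le_rpow_of_exponent_le hq.le (Int.floor_le t)
  have hfl2 : ε < q ^ ((⌊t⌋:ℤ)+1) := by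
    rw [zpow_eq_rpow hq0, ← hrt]
    apply Real.rpow_lt_rpow_of_exponent_lt hq
    push_cast
    exact Int.lt_floor_add_one t
  refine ⟨?_, ?_, ?_⟩
  · rw [hbb, zpow_add_one₀ hq0.ne']
    calc q ^ ⌊t⌋ * q ≤ ε * q := mul_le_mul_of_nonneg_right hfl hq0.le
      _ = q * ε := mul_comm _ _
  · rw [hbb, zpow_add_one₀ hq0.ne']
    calc q * ε = ε * q := mul_comm _ _
      _ < q ^ (⌊t⌋+1) * q := mul_lt_mul_of_pos_right hfl2 hq0
  · rw [hbb]
    have h2 : (⌊t⌋:ℝ) < 0 := lt_of_le_of_lt (Int.floor_le t) ht0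
    have : ⌊t⌋ < 0 := by exact_mod_cast h2
    omega

lemma bb_zero_of_big {q ε : ℝ} (hq : 1 < q) (hε : 0 < ε) (h1 : ε < q) (h2 : ε⁻¹ < q) :
    bb (Real.logb q ε) = 0 := by
  rcases le_or_gt 1 ε with h | h
  · obtain ⟨ha, _, hc⟩ := bb_ge_one hq h
    have hlt : q ^ bb (Real.logb q ε) < q ^ (1:ℤ) := lt_of_le_of_lt ha (by simpa using h1)
    have := (zpow_lt_zpow_iff_right₀ hq).mp hlt
    omega
  · obtain ⟨_, hb, hc⟩ := bb_lt_one hq hε h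
    have h1' : (1:ℝ) < q * ε := by
      have := mul_lt_mul_of_pos_right h2 hε
      rwa [inv_mul_cancel₀ hε.ne'] at this
    have hlt : q ^ (0:ℤ) < q ^ (bb (Real.logb q ε) + 1) := by
      rw [zpow_zero]; exact lt_trans h1' hb
    have := (zpow_lt_zpow_iff_right₀ hq).mp hlt
    omega

lemma finite_primes_le (M : ℝ) : {p : Nat.Primes | ((p:ℕ):ℝ) ≤ M}.Finite := by
  have h : {n : ℕ | (n:ℝ) ≤ M}.Finite := by
    apply Set.Finite.subset (Set.finite_Iic ⌈M⌉₊)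
    intro n hn
    have : (n:ℝ) ≤ (⌈M⌉₊:ℝ) := le_trans hn (Nat.le_ceil M)
    exact_mod_cast this
  exact h.preimage Subtype.coe_injective.injOn

lemma bb_eventually_zero {ε : ℝ} (hε : 0 < ε) :
    ∀ᶠ p : Nat.Primes in Filter.cofinite, bb (Real.logb (p:ℕ) ε) = 0 := by
  filter_upwards [(finite_primes_le (max ε ε⁻¹)).eventually_cofinite_notMem] with p hp
  simp only [Set.mem_setOf_eq, not_le] at hp
  exact bb_zero_of_big (one_lt_p p) hε (lt_of_le_of_lt (le_max_left _ _) hp)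
    (lt_of_le_of_lt (le_max_right _ _) hp)

lemma bddAbove_norm (y : FA) : BddAbove (Set.range fun p : Nat.Primes => ‖y.1 p‖) := by
  have hfin : {p : Nat.Primes | ¬ ‖y.1 p‖ ≤ 1}.Finite := Filter.eventually_cofinite.mp y.2
  obtain ⟨C, hC⟩ := (hfin.image fun p => ‖y.1 p‖).bddAbove
  refine ⟨max C 1, ?_⟩
  rintro _ ⟨p, rfl⟩
  by_cases h : ‖y.1 p‖ ≤ 1
  · exact le_max_of_le_right h
  · exact le_max_of_le_left (hC ⟨p, h, rfl⟩)

lemma anorm_le_iff (y : FA) {ε : ℝ} (hε : 0 < ε) :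
    anorm y ≤ ε ↔ ∀ p : Nat.Primes, ‖y.1 p‖ ≤ ((p:ℕ):ℝ) ^ bb (Real.logb (p:ℕ) ε) := by
  obtain ⟨C, hC⟩ := bddAbove_norm y
  have hC' : ∀ p : Nat.Primes, ‖y.1 p‖ ≤ C := fun p => hC ⟨p, rfl⟩
  have hbdd0 : BddAbove (Set.range fun p : Nat.Primes => ‖y.1 p‖ / (p:ℕ)) := by
    refine ⟨max C 0, ?_⟩
    rintro _ ⟨p, rfl⟩
    exact le_max_of_le_left ((div_le_self (norm_nonneg _) (one_lt_p p).le).trans (hC' p))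
  rcases le_or_gt 1 ε with h1 | h1
  · constructor
    · intro h p
      obtain ⟨hle, hlt, hk0⟩ := bb_ge_one (one_lt_p p) h1
      unfold anorm at h
      split_ifs at h with hall
      · calc ‖y.1 p‖ ≤ 1 := hall p
          _ = ((p:ℕ):ℝ) ^ (0:ℤ) := (zpow_zero _).symm
          _ ≤ _ := zpow_le_zpow_right₀ (one_lt_p p).le hk0
      · have hle2 : ‖y.1 p‖ ≤ ε := (le_ciSup (bddAbove_norm y) p).trans h
        exact padic_norm_le_of_le _ hlt hle2
    · intro h
      unfold anorm
      split_ifs with hall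
      · refine ciSup_le fun p => ?_
        calc ‖y.1 p‖ / (p:ℕ) ≤ ‖y.1 p‖ := div_le_self (norm_nonneg _) (one_lt_p p).le
          _ ≤ 1 := hall p
          _ ≤ ε := h1
      · exact ciSup_le fun p => (h p).trans (bb_ge_one (one_lt_p p) h1).1
  · constructor
    · intro h p
      obtain ⟨hle, hlt, hk0⟩ := bb_lt_one (one_lt_p p) hε h1
      unfold anorm at h
      split_ifs at h with hall
      · have h2 : ‖y.1 p‖ / (p:ℕ) ≤ ε := (le_ciSup hbdd0 p).trans h
        have h3 : ‖y.1 p‖ ≤ ((p:ℕ):ℝ) * ε := by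
          rw [div_le_iff₀ (lt_trans one_pos (one_lt_p p))] at h2
          linarith [h2]
        exact padic_norm_le_of_le _ hlt h3
      · exfalso
        push_neg at hall
        obtain ⟨q, hq⟩ := hall
        have := (le_ciSup (bddAbove_norm y) q).trans h
        linarith
    · intro h
      unfold anorm
      have hall : ∀ p : Nat.Primes, ‖y.1 p‖ ≤ 1 := fun p => by
        obtain ⟨hle, hlt, hk0⟩ := bb_lt_one (one_lt_p p) hε h1
        calc ‖y.1 p‖ ≤ ((p:ℕ):ℝ) ^ bb (Real.logb (p:ℕ) ε) := h p
          _ ≤ ((p:ℕ):ℝ) ^ (0:ℤ) := zpow_le_zpow_right₀ (one_lt_p p).le hk0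
          _ = 1 := zpow_zero _
      rw [if_pos hall]
      refine ciSup_le fun p => ?_
      have h2 : ‖y.1 p‖ ≤ ((p:ℕ):ℝ) * ε := (h p).trans (bb_lt_one (one_lt_p p) hε h1).1
      rw [div_le_iff₀ (lt_trans one_pos (one_lt_p p))]
      linarith

end AuxLemmas

/-- The closed ball of radius `ε` around `x⁰` in `𝔸_f` equals the product set
`∏_p (x⁰_p + p^{-α_p(ε)} ℤ_p)` with `α_p(ε) = [[log_p ε]]`; in particular it is compact
in the restricted product topology. -/
theorem stmt_8 (x0 : FA) (ε : ℝ) (hε : 0 < ε) :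
    {x : FA | anorm (x - x0) ≤ ε}
        = {x : FA | ∀ p : Nat.Primes, ‖x.1 p - x0.1 p‖ ≤ (p : ℝ) ^ bb (Real.logb p ε)} ∧
      @IsCompact FA restrictedTop {x : FA | anorm (x - x0) ≤ ε} := by
  have heq : {x : FA | anorm (x - x0) ≤ ε}
      = {x : FA | ∀ p : Nat.Primes, ‖x.1 p - x0.1 p‖ ≤ (p : ℝ) ^ bb (Real.logb p ε)} := by
    ext x
    simp only [Set.mem_setOf_eq]
    rw [anorm_le_iff (x - x0) hε]
    rfl
  refine ⟨heq, ?_⟩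
  rw [heq]
  set α : Nat.Primes → ℤ := fun p => bb (Real.logb (p:ℕ) ε) with hα
  set T : Set (Π p : Nat.Primes, ℚ_[p.1]) :=
    Set.univ.pi fun p => Metric.closedBall (x0.1 p) (((p:ℕ):ℝ) ^ α p) with hTdef
  have hTc : IsCompact T := isCompact_univ_pi fun p => isCompact_closedBall _ _
  have hmemT : ∀ y, y ∈ T ↔ ∀ p : Nat.Primes, ‖y p - x0.1 p‖ ≤ ((p:ℕ):ℝ) ^ α p := by
    intro y
    simp [hTdef, Set.mem_univ_pi, Metric.mem_closedBall, dist_eq_norm]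
  have hFfin : {p : Nat.Primes | ¬ (α p = 0 ∧ ‖x0.1 p‖ ≤ 1)}.Finite := by
    have h1 : {p : Nat.Primes | ¬ α p = 0}.Finite :=
      Filter.eventually_cofinite.mp (bb_eventually_zero hε)
    have h2 : {p : Nat.Primes | ¬ ‖x0.1 p‖ ≤ 1}.Finite := Filter.eventually_cofinite.mp x0.2
    refine (h1.union h2).subset ?_
    intro p hp
    simp only [Set.mem_setOf_eq, not_and_or] at hp
    exact hp
  set F : Finset Nat.Primes := hFfin.toFinset with hFdef
  have hauto : ∀ y ∈ T, ∀ p : Nat.Primes, p ∉ F → ‖y p‖ ≤ 1 := by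
    intro y hy p hp
    rw [hFdef, Set.Finite.mem_toFinset, Set.mem_setOf_eq, not_not] at hp
    obtain ⟨h1, h2⟩ := hp
    have h3 : ‖y p - x0.1 p‖ ≤ 1 := by
      have := (hmemT y).mp hy p
      rwa [h1, zpow_zero] at this
    calc ‖y p‖ = ‖(y p - x0.1 p) + x0.1 p‖ := by rw [sub_add_cancel]
      _ ≤ max ‖y p - x0.1 p‖ ‖x0.1 p‖ := Padic.nonarchimedean _ _
      _ ≤ 1 := max_le h3 h2
  have hsub : ∀ y ∈ T, y ∈ adeleSubring := by
    intro y hy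
    show ∀ᶠ p : Nat.Primes in Filter.cofinite, ‖y p‖ ≤ 1
    filter_upwards [F.eventually_cofinite_notMem] with p hp
    exact hauto y hy p hp
  let f : ↥T → FA := fun t => ⟨t.1, hsub t.1 t.2⟩
  have hcont : @Continuous ↥T FA _ restrictedTop f := by
    show @Continuous ↥T FA _ (TopologicalSpace.generateFrom _) f
    apply continuous_generateFrom_iff.mpr
    rintro B ⟨S, U, hU, rfl⟩
    have hW : ∀ p : Nat.Primes,
        IsOpen (if p ∈ S then U p else {z : ℚ_[p.1] | ‖z‖ < ((p:ℕ):ℝ)}) := by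
      intro p
      split_ifs
      · exact hU p
      · have hball : {z : ℚ_[p.1] | ‖z‖ < ((p:ℕ):ℝ)} = Metric.ball 0 ((p:ℕ):ℝ) := by
          ext z; simp [Metric.mem_ball, dist_zero_right]
        rw [hball]; exact Metric.isOpen_ball
    have hVopen : IsOpen (⋂ q ∈ S ∪ F, (fun y : Π p : Nat.Primes, ℚ_[p.1] => y q) ⁻¹'
        (if q ∈ S then U q else {z : ℚ_[q.1] | ‖z‖ < ((q:ℕ):ℝ)})) :=
      isOpen_biInter_finset fun q _ => (hW q).preimage (continuous_apply q)
    have hpre : f ⁻¹' {x : FA | (∀ p ∈ S, x.1 p ∈ U p) ∧ ∀ p ∉ S, ‖x.1 p‖ ≤ 1}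
        = Subtype.val ⁻¹' (⋂ q ∈ S ∪ F, (fun y : Π p : Nat.Primes, ℚ_[p.1] => y q) ⁻¹'
            (if q ∈ S then U q else {z : ℚ_[q.1] | ‖z‖ < ((q:ℕ):ℝ)})) := by
      ext t
      simp only [Set.mem_preimage, Set.mem_setOf_eq, Set.mem_iInter, Finset.mem_union]
      constructor
      · rintro ⟨h1, h2⟩ q hq
        by_cases hqS : q ∈ S
        · simpa [hqS] using h1 q hqS
        · have hle : ‖t.1 q‖ ≤ 1 := h2 q hqS
          simp only [hqS, if_false, Set.mem_preimage, Set.mem_setOf_eq]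
          exact lt_of_le_of_lt hle (one_lt_p q)
      · intro hV
        constructor
        · intro q hq
          have := hV q (Or.inl hq)
          simpa [hq] using this
        · intro q hq
          by_cases hqF : q ∈ F
          · have := hV q (Or.inr hqF)
            simp only [hq, if_false, Set.mem_preimage, Set.mem_setOf_eq] at this
            exact padic_norm_le_one_of_lt _ this
          · exact hauto t.1 t.2 q hqF
    rw [hpre]
    exact hVopen.preimage continuous_subtype_val
  haveI hcomp : CompactSpace ↥T := isCompact_iff_compactSpace.mp hTc
  have himg : Set.range f
      = {x : FA | ∀ p : Nat.Primes, ‖x.1 p - x0.1 p‖ ≤ (p : ℝ) ^ bb (Real.logb p ε)} := by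
    ext x
    constructor
    · rintro ⟨t, rfl⟩
      exact fun p => (hmemT t.1).mp t.2 p
    · intro hx
      exact ⟨⟨x.1, (hmemT x.1).mpr hx⟩, Subtype.ext rfl⟩
  have himage := @IsCompact.image ↥T FA _ restrictedTop (s := Set.univ) (f := f)
    isCompact_univ hcont
  rw [Set.image_univ, himg] at himage
  exact himage
end

section
/- Let μ be the Haar measure on (𝔸_f, +) normalized so that μ(∏_p ℤ_p) = 1. Then for every r in the set P of nonzero integer prime powers, μ(B_r(0)) = Φ(r) and μ(S_r(0)) = Φ(r) − Φ(r₋), where B_r(0) = {x : ‖x‖ ≤ r}, S_r(0) = {x : ‖x‖ = r}, Φ(x) = ∏_p p^{[[log_p x]]}, and r₋ is the previous element of P. -/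
open Filter MeasureTheory
open scoped Classical

noncomputable section

open Filter MeasureTheory

instance : TopologicalSpace FA := restrictedTop
instance : MeasurableSpace FA := borel FA
instance : BorelSpace FA := ⟨rfl⟩

/-- The unit ball `∏_p ℤ_p` inside `𝔸_f`. -/
def unitBall : Set FA := {x : FA | ∀ p : Nat.Primes, ‖x.1 p‖ ≤ 1}

/-- The fractional part `{x}_p` of a `p`-adic number (a rational in `[0,1)`). -/
def padicFrac {p : ℕ} [Fact p.Prime] (x : ℚ_[p]) : ℚ :=
  if h : ‖(p : ℚ_[p]) ^ (-x.valuation).toNat * x‖ ≤ 1 then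
    ((PadicInt.appr (⟨_, h⟩ : ℤ_[p]) (-x.valuation).toNat : ℕ) : ℚ) / (p : ℚ) ^ (-x.valuation).toNat
  else 0

/-- The standard additive character of `𝔸_f`: `χ(x) = ∏_p exp(−2πi {x_p}_p)`. -/
def achar (x : FA) : ℂ :=
  ∏ᶠ p : Nat.Primes,
    Complex.exp (-(2 * Real.pi * (padicFrac (x.1 p) : ℝ) : ℝ) * Complex.I)

end


open MeasureTheory


noncomputable section Aux
open Real

namespace S9

lemma nonarch {p : ℕ} [Fact p.Prime] (a b : ℚ_[p]) : ‖a + b‖ ≤ max ‖a‖ ‖b‖ :=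
  Padic.nonarchimedean a b

lemma nonarch_sub {p : ℕ} [Fact p.Prime] (a b : ℚ_[p]) : ‖a - b‖ ≤ max ‖a‖ ‖b‖ := by
  simpa [sub_eq_add_neg] using Padic.nonarchimedean a (-b)

lemma norm_le_one_shift {p : ℕ} [Fact p.Prime] {a b : ℚ_[p]} (h1 : ‖a - b‖ ≤ 1)
    (h2 : ‖b‖ ≤ 1) : ‖a‖ ≤ 1 := by
  have h := Padic.nonarchimedean (a - b) b
  rw [sub_add_cancel] at h
  exact h.trans (max_le h1 h2)

/-- Ball with center `c` and exponents `e`. -/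
def Bc (c : FA) (e : Nat.Primes → ℤ) : Set FA :=
  {x : FA | ∀ p : Nat.Primes, ‖x.1 p - c.1 p‖ ≤ (p : ℝ) ^ e p}

/-- Ball centered at `0`. -/
def Bz (e : Nat.Primes → ℤ) : Set FA :=
  {x : FA | ∀ p : Nat.Primes, ‖x.1 p‖ ≤ (p : ℝ) ^ e p}

lemma badSet_finite (c : FA) : {p : Nat.Primes | ¬ ‖c.1 p‖ ≤ 1}.Finite :=
  Filter.eventually_cofinite.mp c.2

lemma isOpen_gen (S : Finset Nat.Primes) (U : Π p : Nat.Primes, Set ℚ_[p.1])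
    (hU : ∀ p, IsOpen (U p)) :
    IsOpen {x : FA | (∀ p ∈ S, x.1 p ∈ U p) ∧ ∀ p ∉ S, ‖x.1 p‖ ≤ 1} :=
  TopologicalSpace.isOpen_generateFrom_of_mem ⟨S, U, hU, rfl⟩

lemma pball_isOpen {p : ℕ} [Fact p.Prime] (c : ℚ_[p]) {r : ℝ} (hr : r ≠ 0) :
    IsOpen {y : ℚ_[p] | ‖y - c‖ ≤ r} := by
  have := IsUltrametricDist.isOpen_closedBall c hr
  simpa [Metric.closedBall, dist_eq_norm] using this

lemma ppow_pos (p : Nat.Primes) (k : ℤ) : (0:ℝ) < (p : ℝ) ^ k :=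
  zpow_pos (by exact_mod_cast p.2.pos) k

lemma one_lt_pR (p : Nat.Primes) : (1:ℝ) < (p : ℝ) := by exact_mod_cast p.2.one_lt

lemma isOpen_Bc (c : FA) (e : Nat.Primes → ℤ) (S : Finset Nat.Primes)
    (hS : ∀ p ∉ S, e p = 0) : IsOpen (Bc c e) := by
  classical
  set T : Finset Nat.Primes := S ∪ (badSet_finite c).toFinset with hT
  have key : Bc c e = {x : FA | (∀ p ∈ T, x.1 p ∈ {y | ‖y - c.1 p‖ ≤ (p:ℝ) ^ e p}) ∧
      ∀ p ∉ T, ‖x.1 p‖ ≤ 1} := by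
    ext x
    constructor
    · intro hx
      refine ⟨fun p _ => hx p, fun p hp => ?_⟩
      have hpS : p ∉ S := fun h => hp (Finset.mem_union_left _ h)
      have hc : ‖c.1 p‖ ≤ 1 := by
        by_contra h
        exact hp (Finset.mem_union_right _ ((badSet_finite c).mem_toFinset.2 h))
      have h1 := hx p
      rw [hS p hpS, zpow_zero] at h1
      exact norm_le_one_shift h1 hc
    · rintro ⟨h1, h2⟩ p
      by_cases hp : p ∈ T
      · exact h1 p hp
      · have hpS : p ∉ S := fun h => hp (Finset.mem_union_left _ h)
        have hc : ‖c.1 p‖ ≤ 1 := by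
          by_contra h
          exact hp (Finset.mem_union_right _ ((badSet_finite c).mem_toFinset.2 h))
        rw [hS p hpS, zpow_zero]
        exact (nonarch_sub _ _).trans (max_le (h2 p hp) hc)
  rw [key]
  exact isOpen_gen T _ fun p => pball_isOpen _ (ppow_pos p (e p)).ne'

lemma isOpen_Bz (e : Nat.Primes → ℤ) (S : Finset Nat.Primes)
    (hS : ∀ p ∉ S, e p = 0) : IsOpen (Bz e) := by
  have h := isOpen_Bc 0 e S hS
  have : Bc 0 e = Bz e := by
    ext x; simp [Bc, Bz]
  rwa [this] at h

lemma coe_add (c x : FA) (p : Nat.Primes) : (c + x).1 p = c.1 p + x.1 p := rfl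

lemma continuous_add_left (c : FA) : Continuous (fun x : FA => c + x) := by
  classical
  apply continuous_generateFrom_iff.mpr
  rintro B ⟨S, U, hU, rfl⟩
  set T : Finset Nat.Primes := S ∪ (badSet_finite c).toFinset with hT
  have hbad : ∀ p ∉ T, ‖c.1 p‖ ≤ 1 := by
    intro p hp
    by_contra h
    exact hp (Finset.mem_union_right _ ((badSet_finite c).mem_toFinset.2 h))
  set V : Π p : Nat.Primes, Set ℚ_[p.1] :=
    fun p => if p ∈ S then (fun y => c.1 p + y) ⁻¹' U p else {y | ‖y + c.1 p‖ ≤ 1} with hV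
  have hVopen : ∀ p, IsOpen (V p) := by
    intro p
    rw [hV]
    by_cases hp : p ∈ S
    · simpa [hp] using (hU p).preimage (_root_.continuous_add_left (c.1 p))
    · simp only [hp, if_false]
      have := pball_isOpen (-(c.1 p)) (r := 1) one_ne_zero
      simpa [sub_neg_eq_add] using this
  have key : (fun x : FA => c + x) ⁻¹' {x : FA | (∀ p ∈ S, x.1 p ∈ U p) ∧ ∀ p ∉ S, ‖x.1 p‖ ≤ 1}
      = {x : FA | (∀ p ∈ T, x.1 p ∈ V p) ∧ ∀ p ∉ T, ‖x.1 p‖ ≤ 1} := by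
    ext x
    simp only [Set.mem_preimage, Set.mem_setOf_eq, coe_add]
    constructor
    · rintro ⟨h1, h2⟩
      constructor
      · intro p hp
        rw [hV]
        by_cases hpS : p ∈ S
        · simpa [hpS] using h1 p hpS
        · simp only [hpS, if_false, Set.mem_setOf_eq, add_comm]
          exact h2 p hpS
      · intro p hp
        have hpS : p ∉ S := fun h => hp (Finset.mem_union_left _ h)
        have := h2 p hpS
        exact norm_le_one_shift (a := x.1 p) (b := -(c.1 p))
          (by simpa [sub_neg_eq_add, add_comm] using this) (by simpa using hbad p hp)
    · rintro ⟨h1, h2⟩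
      constructor
      · intro p hp
        have := h1 p (Finset.mem_union_left _ hp)
        rw [hV] at this
        simpa [hp] using this
      · intro p hp
        by_cases hpT : p ∈ T
        · have := h1 p hpT
          rw [hV] at this
          simp only [hp, if_false, Set.mem_setOf_eq] at this
          simpa [add_comm] using this
        · exact (nonarch _ _).trans (max_le (hbad p hpT) (h2 p hpT))
  rw [key]
  exact isOpen_gen T V hVopen

lemma measurable_add_left (c : FA) : Measurable (fun x : FA => c + x) :=
  (continuous_add_left c).measurable

lemma meas_translate (μ : Measure FA) (hinv : μ.IsAddLeftInvariant) (c : FA) {s : Set FA}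
    (hs : MeasurableSet s) : μ ((fun x => c + x) ⁻¹' s) = μ s := by
  conv_rhs => rw [← hinv.map_add_left_eq_self c]
  rw [Measure.map_apply (measurable_add_left c) hs]

/-- The adele supported at `q` with value `v`. -/
def single (q : Nat.Primes) (v : ℚ_[q.1]) : FA :=
  ⟨Pi.single q v, by
    apply Filter.eventually_cofinite.mpr
    apply Set.Finite.subset (Set.finite_singleton q)
    intro p hp
    simp only [Set.mem_setOf_eq, not_le] at hp
    by_contra hpq
    rw [Pi.single_eq_of_ne (by simpa using hpq)] at hp
    norm_num at hp⟩

lemma single_self (q : Nat.Primes) (v : ℚ_[q.1]) : (single q v).1 q = v :=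
  Pi.single_eq_same _ _

lemma single_ne (q : Nat.Primes) (v : ℚ_[q.1]) {p : Nat.Primes} (hp : p ≠ q) :
    (single q v).1 p = 0 :=
  Pi.single_eq_of_ne hp _

lemma digit {q : ℕ} [hq : Fact q.Prime] (m : ℤ) (x : ℚ_[q]) (hx : ‖x‖ ≤ (q : ℝ) ^ (m + 1)) :
    ∃ t : ℕ, t < q ∧ ‖x - (t : ℚ_[q]) * (q : ℚ_[q]) ^ (-(m + 1))‖ ≤ (q : ℝ) ^ m := by
  have hq0 : (q : ℚ_[q]) ≠ 0 := Nat.cast_ne_zero.mpr hq.1.ne_zero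
  have hqR : (0:ℝ) < (q : ℝ) := by exact_mod_cast hq.1.pos
  set z : ℚ_[q] := x * (q : ℚ_[q]) ^ (m + 1) with hz
  have hznorm : ‖z‖ ≤ 1 := by
    rw [hz, norm_mul, Padic.norm_p_zpow]
    calc ‖x‖ * (q : ℝ) ^ (-(m + 1)) ≤ (q : ℝ) ^ (m + 1) * (q : ℝ) ^ (-(m + 1)) :=
          mul_le_mul_of_nonneg_right hx (zpow_pos hqR _).le
      _ = 1 := by rw [← zpow_add₀ hqR.ne', add_neg_cancel, zpow_zero]
  set Z : ℤ_[q] := ⟨z, hznorm⟩ with hZ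
  refine ⟨Z.appr 1, by simpa using Z.appr_lt 1, ?_⟩
  set t := Z.appr 1 with ht
  have hspec : ‖z - (t : ℚ_[q])‖ ≤ (q : ℝ) ^ (-1 : ℤ) := by
    have h1 : ‖Z - (t : ℤ_[q])‖ ≤ (q : ℝ) ^ (-1 : ℤ) := by
      have := (PadicInt.norm_le_pow_iff_mem_span_pow (Z - (t : ℤ_[q])) 1).mpr
        (by simpa using Z.appr_spec 1)
      simpa using this
    have h2 : ((Z - (t : ℤ_[q]) : ℤ_[q]) : ℚ_[q]) = z - (t : ℚ_[q]) := by
      push_cast [hZ]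
      rfl
    rw [PadicInt.norm_def, h2] at h1
    exact h1
  have hzx : z * (q : ℚ_[q]) ^ (-(m + 1)) = x := by
    rw [hz, mul_assoc, ← zpow_add₀ hq0, add_neg_cancel, zpow_zero, mul_one]
  have hxeq : x - (t : ℚ_[q]) * (q : ℚ_[q]) ^ (-(m + 1))
      = (z - (t : ℚ_[q])) * (q : ℚ_[q]) ^ (-(m + 1)) := by
    rw [sub_mul, hzx]
  rw [hxeq, norm_mul, Padic.norm_p_zpow, neg_neg]
  calc ‖z - (t : ℚ_[q])‖ * (q : ℝ) ^ (m + 1)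
      ≤ (q : ℝ) ^ (-1 : ℤ) * (q : ℝ) ^ (m + 1) :=
        mul_le_mul_of_nonneg_right hspec (zpow_pos hqR _).le
    _ = (q : ℝ) ^ m := by
        rw [← zpow_add₀ hqR.ne']
        norm_num

lemma digit_norm {q : ℕ} [hq : Fact q.Prime] {t t' : ℕ} (ht : t < q) (ht' : t' < q)
    (hne : t ≠ t') : ‖(t : ℚ_[q]) - (t' : ℚ_[q])‖ = 1 := by
  have hcast : (t : ℚ_[q]) - (t' : ℚ_[q]) = (((t : ℤ) - (t' : ℤ) : ℤ) : ℚ_[q]) := by push_cast; ring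
  have h1 : ‖(t : ℚ_[q]) - (t' : ℚ_[q])‖ ≤ 1 := by
    rw [hcast]; exact Padic.norm_int_le_one _
  have h2 : ¬ ‖(t : ℚ_[q]) - (t' : ℚ_[q])‖ < 1 := by
    rw [hcast, Padic.norm_intCast_lt_one_iff]
    intro h
    have habs : |(t : ℤ) - (t' : ℤ)| < (q : ℤ) := by rw [abs_lt]; omega
    have := Int.eq_zero_of_abs_lt_dvd h habs
    omega
  exact le_antisymm h1 (not_lt.mp h2)

lemma step (μ : Measure FA) (hinv : μ.IsAddLeftInvariant)
    (e : Nat.Primes → ℤ) (S : Finset Nat.Primes) (hS : ∀ p ∉ S, e p = 0) (q : Nat.Primes) :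
    μ (Bz (Function.update e q (e q + 1))) = (q : ℕ) * μ (Bz e) := by
  classical
  set e' := Function.update e q (e q + 1) with he'
  set c : ℕ → FA := fun t => single q ((t : ℚ_[q.1]) * (q : ℚ_[q.1]) ^ (-(e q + 1))) with hc
  have hnorm_c : ∀ t : ℕ, ‖(c t).1 q‖ = ‖(t : ℚ_[q.1])‖ * (q : ℝ) ^ (e q + 1) := by
    intro t
    rw [hc]
    simp only [single_self, norm_mul, Padic.norm_p_zpow, neg_neg]
  have hnat_le : ∀ t : ℕ, ‖(t : ℚ_[q.1])‖ ≤ 1 := by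
    intro t
    have := Padic.norm_int_le_one (p := q.1) (t : ℤ)
    simpa using this
  have hmeas : ∀ t : ℕ, MeasurableSet (Bc (c t) e) := fun t =>
    (isOpen_Bc (c t) e S hS).measurableSet
  have hμt : ∀ t : ℕ, μ (Bc (c t) e) = μ (Bz e) := by
    intro t
    have hpre : (fun x : FA => c t + x) ⁻¹' (Bc (c t) e) = Bz e := by
      ext x
      simp only [Set.mem_preimage, Bc, Bz, Set.mem_setOf_eq, coe_add]
      constructor
      · intro h p; simpa using h p
      · intro h p; simpa using h p
    rw [← hpre, meas_translate μ hinv _ (hmeas t)]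
  have hunion : (⋃ t ∈ Finset.range q.1, Bc (c t) e) = Bz e' := by
    ext x
    simp only [Set.mem_iUnion, Finset.mem_range, Bz, Bc, Set.mem_setOf_eq]
    constructor
    · rintro ⟨t, ht, hx⟩ p
      by_cases hp : p = q
      · subst hp
        have h1 := hx p
        have hcn : ‖(c t).1 p‖ ≤ (p : ℝ) ^ (e p + 1) := by
          rw [hnorm_c t]
          calc ‖(t : ℚ_[p.1])‖ * (p : ℝ) ^ (e p + 1) ≤ 1 * (p : ℝ) ^ (e p + 1) :=
                mul_le_mul_of_nonneg_right (hnat_le t) (ppow_pos p _).le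
            _ = (p : ℝ) ^ (e p + 1) := one_mul _
        have : ‖x.1 p‖ ≤ max ((p : ℝ) ^ e p) ((p : ℝ) ^ (e p + 1)) := by
          have h2 : ‖x.1 p‖ = ‖(x.1 p - (c t).1 p) + (c t).1 p‖ := by rw [sub_add_cancel]
          rw [h2]
          exact (nonarch _ _).trans (max_le_max h1 hcn)
        rw [he', Function.update_self]
        refine this.trans (max_le ?_ le_rfl)
        exact zpow_le_zpow_right₀ (one_lt_pR p).le (by omega)
      · have h1 := hx p
        rw [single_ne q _ hp, sub_zero] at h1
        rw [he', Function.update_of_ne hp]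
        exact h1
    · intro hx
      have hq1 := hx q
      rw [he', Function.update_self] at hq1
      obtain ⟨t, ht, hdig⟩ := digit (e q) (x.1 q) hq1
      refine ⟨t, ht, fun p => ?_⟩
      by_cases hp : p = q
      · subst hp
        rw [hc]
        simpa [single_self] using hdig
      · rw [single_ne q _ hp, sub_zero]
        have := hx p
        rwa [he', Function.update_of_ne hp] at this
  have hdisj : (↑(Finset.range q.1) : Set ℕ).PairwiseDisjoint fun t => Bc (c t) e := by
    intro t ht t' ht' hne
    simp only [Finset.coe_range, Set.mem_Iio] at ht ht'
    rw [Function.onFun, Set.disjoint_left]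
    intro x hx hx'
    have h1 := hx q
    have h2 := hx' q
    have heq : (c t).1 q - (c t').1 q = ((t : ℚ_[q.1]) - (t' : ℚ_[q.1])) *
        (q : ℚ_[q.1]) ^ (-(e q + 1)) := by
      rw [hc]; simp only [single_self]; ring
    have h3 : ‖(c t).1 q - (c t').1 q‖ ≤ (q : ℝ) ^ (e q) := by
      have : (c t).1 q - (c t').1 q = (x.1 q - (c t').1 q) - (x.1 q - (c t).1 q) := by ring
      rw [this]
      exact (nonarch_sub _ _).trans (max_le h2 h1)
    rw [heq, norm_mul, digit_norm ht ht' hne, one_mul, Padic.norm_p_zpow, neg_neg] at h3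
    have : (q : ℝ) ^ (e q) < (q : ℝ) ^ (e q + 1) :=
      zpow_lt_zpow_right₀ (one_lt_pR q) (by omega)
    linarith
  have hsum := measure_biUnion_finset (μ := μ) hdisj (fun t _ => hmeas t)
  rw [hunion] at hsum
  rw [hsum]
  simp only [hμt]
  rw [Finset.sum_const, Finset.card_range, nsmul_eq_mul]

lemma upN (μ : Measure FA) (hinv : μ.IsAddLeftInvariant) :
    ∀ (d : ℕ) (S : Finset Nat.Primes) (f : Nat.Primes → ℕ), (∀ p ∉ S, f p = 0) →
    (∑ p ∈ S, f p = d) → ∀ e : Nat.Primes → ℤ, (∀ p ∉ S, e p = 0) →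
    μ (Bz (fun p => e p + (f p : ℤ)))
      = ENNReal.ofReal (∏ p ∈ S, (p : ℝ) ^ (f p)) * μ (Bz e) := by
  intro d
  induction d with
  | zero =>
    intro S f hf hsum e he
    have hf0 : ∀ p, f p = 0 := by
      intro p
      by_cases hp : p ∈ S
      · exact (Finset.sum_eq_zero_iff.mp hsum) p hp
      · exact hf p hp
    have h1 : (fun p => e p + (f p : ℤ)) = e := by funext p; rw [hf0]; simp
    have h2 : (∏ p ∈ S, (p : ℝ) ^ (f p)) = 1 :=
      Finset.prod_eq_one fun p _ => by rw [hf0]; norm_num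
    rw [h1, h2]
    simp
  | succ d ih =>
    intro S f hf hsum e he
    have hex : ∃ q ∈ S, f q ≠ 0 := by
      by_contra h
      push_neg at h
      rw [Finset.sum_eq_zero h] at hsum
      omega
    obtain ⟨q, hqS, hq0⟩ := hex
    classical
    set f' := Function.update f q (f q - 1) with hf'
    have hf'S : ∀ p ∉ S, f' p = 0 := by
      intro p hp
      rw [hf', Function.update_of_ne (fun h => hp (by rw [h]; exact hqS))]
      exact hf p hp
    have hsum' : ∑ p ∈ S, f' p = d := by
      rw [hf', Finset.sum_update_of_mem hqS]
      have := Finset.add_sum_erase S f hqS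
      rw [← Finset.erase_eq]
      omega
    have ihm := ih S f' hf'S hsum' e he
    have hupdate : (fun p => e p + (f p : ℤ))
        = Function.update (fun p => e p + (f' p : ℤ)) q ((e q + (f' q : ℤ)) + 1) := by
      funext p
      by_cases hp : p = q
      · subst hp
        rw [Function.update_self, hf', Function.update_self]
        have : 1 ≤ f p := Nat.one_le_iff_ne_zero.mpr hq0
        push_cast [this]
        ring
      · rw [Function.update_of_ne hp, hf', Function.update_of_ne hp]
    have hstep := step μ hinv (fun p => e p + (f' p : ℤ)) S
      (fun p hp => by show e p + (f' p : ℤ) = 0; rw [hf'S p hp, he p hp]; simp) q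
    rw [← hupdate] at hstep
    rw [hstep, ihm]
    have hprod : (∏ p ∈ S, (p : ℝ) ^ (f p)) = (q : ℕ) * ∏ p ∈ S, (p : ℝ) ^ (f' p) := by
      have hL : (∏ p ∈ S, (p : ℝ) ^ (f p))
          = (∏ p ∈ S.erase q, (p : ℝ) ^ (f p)) * (q : ℝ) ^ (f q) :=
        (Finset.prod_erase_mul S _ hqS).symm
      have hR : (∏ p ∈ S, (p : ℝ) ^ (f' p))
          = (∏ p ∈ S.erase q, (p : ℝ) ^ (f p)) * (q : ℝ) ^ (f q - 1) := by
        rw [← Finset.prod_erase_mul S _ hqS]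
        congr 1
        · exact Finset.prod_congr rfl fun p hp => by
            rw [hf', Function.update_of_ne (Finset.ne_of_mem_erase hp)]
        · rw [hf', Function.update_self]
      have hq1 : 1 ≤ f q := Nat.one_le_iff_ne_zero.mpr hq0
      have hqq : (q : ℝ) ^ (f q) = (q : ℝ) * (q : ℝ) ^ (f q - 1) := by
        conv_lhs => rw [show f q = (f q - 1) + 1 by omega]
        rw [pow_succ]
        ring
      rw [hL, hR, hqq]
      ring
    rw [hprod, ENNReal.ofReal_mul (by positivity), ENNReal.ofReal_natCast, mul_assoc]

lemma measB (μ : Measure FA) (hinv : μ.IsAddLeftInvariant) (hone : μ unitBall = 1)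
    (S : Finset Nat.Primes) (e : Nat.Primes → ℤ) (he : ∀ p ∉ S, e p = 0) :
    μ (Bz e) = ENNReal.ofReal (∏ p ∈ S, (p : ℝ) ^ (e p)) := by
  have hBz0 : Bz (fun _ => (0 : ℤ)) = unitBall := by
    ext x; simp [Bz, unitBall]
  set fp : Nat.Primes → ℕ := fun p => (e p).toNat with hfp
  set fm : Nat.Primes → ℕ := fun p => (-(e p)).toNat with hfm
  have h1 : (fun p => e p + (fm p : ℤ)) = fun p => (fp p : ℤ) := by
    funext p; simp only [hfp, hfm]; omega
  have h2 : (fun p => (0 : ℤ) + (fp p : ℤ)) = fun p => (fp p : ℤ) := by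
    funext p; simp
  have hup1 := upN μ hinv (∑ p ∈ S, fm p) S fm
    (fun p hp => by simp [hfm, he p hp]) rfl e he
  have hup2 := upN μ hinv (∑ p ∈ S, fp p) S fp
    (fun p hp => by simp [hfp, he p hp]) rfl (fun _ => 0) (fun _ _ => rfl)
  rw [h1] at hup1
  rw [h2, hBz0, hone, mul_one] at hup2
  rw [hup2] at hup1
  have hAm : (0 : ℝ) < ∏ p ∈ S, (p : ℝ) ^ (fm p) :=
    Finset.prod_pos fun p _ => pow_pos (by exact_mod_cast p.2.pos) _
  have hne : ENNReal.ofReal (∏ p ∈ S, (p : ℝ) ^ (fm p)) ≠ 0 := by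
    simp only [ne_eq, ENNReal.ofReal_eq_zero, not_le]
    exact hAm
  have key : μ (Bz e) = ENNReal.ofReal (∏ p ∈ S, (p : ℝ) ^ (fp p))
      / ENNReal.ofReal (∏ p ∈ S, (p : ℝ) ^ (fm p)) :=
    (ENNReal.eq_div_iff hne ENNReal.ofReal_ne_top).mpr hup1.symm
  rw [key, ← ENNReal.ofReal_div_of_pos hAm]
  congr 1
  rw [← Finset.prod_div_distrib]
  refine Finset.prod_congr rfl fun p _ => ?_
  have hp0 : (p : ℝ) ≠ 0 := by exact_mod_cast p.2.ne_zero
  rw [← zpow_natCast (p : ℝ) (fp p), ← zpow_natCast (p : ℝ) (fm p), ← zpow_sub₀ hp0]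
  congr 1
  simp only [hfp, hfm]
  omega

instance : Nonempty Nat.Primes := ⟨⟨2, Nat.prime_two⟩⟩

lemma bdd_norms (x : FA) : BddAbove (Set.range fun p : Nat.Primes => ‖x.1 p‖) := by
  have hfin := badSet_finite x
  refine ⟨1 + ∑ p ∈ hfin.toFinset, ‖x.1 p‖, ?_⟩
  rintro r ⟨p, rfl⟩
  have hsum : (0:ℝ) ≤ ∑ q ∈ hfin.toFinset, ‖x.1 q‖ :=
    Finset.sum_nonneg fun q _ => norm_nonneg _
  by_cases hp : p ∈ hfin.toFinset
  · have h1 : ‖x.1 p‖ ≤ ∑ q ∈ hfin.toFinset, ‖x.1 q‖ :=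
      Finset.single_le_sum (fun q _ => norm_nonneg _) hp
    simp only []
    linarith
  · have h1 : ‖x.1 p‖ ≤ 1 := by
      by_contra h
      exact hp (hfin.mem_toFinset.2 h)
    simp only []
    linarith

lemma bdd_norms_div (x : FA) : BddAbove (Set.range fun p : Nat.Primes => ‖x.1 p‖ / p) := by
  obtain ⟨M, hM⟩ := bdd_norms x
  refine ⟨M, ?_⟩
  rintro r ⟨p, rfl⟩
  have h1 : ‖x.1 p‖ / p ≤ ‖x.1 p‖ :=
    div_le_self (norm_nonneg _) (by exact_mod_cast p.2.one_lt.le)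
  exact h1.trans (hM ⟨p, rfl⟩)

lemma anorm_nonneg (x : FA) : 0 ≤ anorm x := by
  unfold anorm
  split
  · exact Real.iSup_nonneg fun p => by positivity
  · exact Real.iSup_nonneg fun p => norm_nonneg _

/-- The exponent function of a radius. -/
def EE (r : ℝ) : Nat.Primes → ℤ := fun p => bb (Real.logb p r)

lemma Pset_cases {r : ℝ} (hr : r ∈ Pset) : 0 < r ∧ (2 ≤ r ∨ r ≤ 1/2) := by
  obtain ⟨p, j, hp, hj, rfl⟩ := hr
  have hp1 : (1:ℝ) < p := by exact_mod_cast hp.one_lt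
  have hp2 : (2:ℝ) ≤ p := by exact_mod_cast hp.two_le
  have hp0 : (0:ℝ) < p := by linarith
  refine ⟨zpow_pos hp0 j, ?_⟩
  rcases lt_or_gt_of_ne hj with hneg | hpos
  · right
    have h1 : (p:ℝ) ^ j ≤ (p:ℝ) ^ (-1 : ℤ) := zpow_le_zpow_right₀ hp1.le (by omega)
    have h2 : (p:ℝ) ^ (-1 : ℤ) = ((p:ℝ))⁻¹ := by simp
    have h3 : ((p:ℝ))⁻¹ ≤ 1/2 := by
      rw [inv_eq_one_div]
      apply div_le_div_of_nonneg_left <;> linarith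
    calc (p:ℝ)^j ≤ (p:ℝ)^(-1:ℤ) := h1
      _ = ((p:ℝ))⁻¹ := h2
      _ ≤ 1/2 := h3
  · left
    have h1 : (p:ℝ) ^ (1 : ℤ) ≤ (p:ℝ) ^ j := zpow_le_zpow_right₀ hp1.le (by omega)
    rw [zpow_one] at h1
    linarith

lemma padic_norm_le_rpow {p : Nat.Primes} {x : ℚ_[p.1]} {t : ℝ}
    (h : ‖x‖ ≤ (p:ℝ) ^ t) : ‖x‖ ≤ (p:ℝ) ^ (⌊t⌋ : ℤ) := by
  have hp1 : (1:ℝ) < (p:ℝ) := one_lt_pR p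
  rcases eq_or_ne x 0 with rfl | hx
  · simp only [norm_zero]
    exact (ppow_pos p _).le
  · rw [Padic.norm_eq_zpow_neg_valuation hx] at h ⊢
    rw [← Real.rpow_intCast (p:ℝ) (-x.valuation)] at h
    have h1 : ((-x.valuation : ℤ) : ℝ) ≤ t := (Real.rpow_le_rpow_left_iff hp1).mp h
    have h2 : -x.valuation ≤ ⌊t⌋ := Int.le_floor.mpr h1
    exact zpow_le_zpow_right₀ hp1.le h2

lemma zpow_le_rpow {p : Nat.Primes} {m : ℤ} {t : ℝ} (h : (m:ℝ) ≤ t) :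
    (p:ℝ) ^ m ≤ (p:ℝ) ^ t := by
  rw [← Real.rpow_intCast (p:ℝ) m]
  exact Real.rpow_le_rpow_left_iff (one_lt_pR p) |>.mpr h

lemma rpow_logb_self (p : Nat.Primes) {r : ℝ} (hr : 0 < r) :
    (p:ℝ) ^ (Real.logb p r) = r :=
  Real.rpow_logb (by exact_mod_cast p.2.pos) (by exact_mod_cast p.2.one_lt.ne') hr

lemma ball_eq {r : ℝ} (hr : r ∈ Pset) : {x : FA | anorm x ≤ r} = Bz (EE r) := by
  obtain ⟨hr0, hcase⟩ := Pset_cases hr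
  rcases hcase with hbig | hsmall
  · -- 2 ≤ r
    have hr1 : (1:ℝ) ≤ r := by linarith
    have hEE : ∀ p : Nat.Primes, EE r p = ⌊Real.logb p r⌋ := by
      intro p
      unfold EE bb
      rw [if_pos (Real.logb_nonneg (one_lt_pR p) hr1)]
    ext x
    simp only [Set.mem_setOf_eq, Bz]
    constructor
    · intro hx p
      rw [hEE p]
      by_cases hall : ∀ q : Nat.Primes, ‖x.1 q‖ ≤ 1
      · have h1 : ‖x.1 p‖ ≤ 1 := hall p
        have h2 : ((p:ℝ)) ^ (0:ℤ) ≤ (p:ℝ) ^ (⌊Real.logb p r⌋) :=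
          zpow_le_zpow_right₀ (one_lt_pR p).le
            (Int.floor_nonneg.mpr (Real.logb_nonneg (one_lt_pR p) hr1))
        rw [zpow_zero] at h2
        linarith
      · have hx1 : anorm x = norm1 x := if_neg hall
        have h1 : ‖x.1 p‖ ≤ norm1 x := le_ciSup (bdd_norms x) p
        have h2 : ‖x.1 p‖ ≤ (p:ℝ) ^ (Real.logb p r) := by
          rw [rpow_logb_self p hr0]
          exact h1.trans (hx1 ▸ hx)
        exact padic_norm_le_rpow h2
    · intro hx
      by_cases hall : ∀ q : Nat.Primes, ‖x.1 q‖ ≤ 1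
      · have hx0 : anorm x = norm0 x := if_pos hall
        rw [hx0]
        apply Real.iSup_le _ hr0.le
        intro p
        have h1 : ‖x.1 p‖ / p ≤ ‖x.1 p‖ :=
          div_le_self (norm_nonneg _) (by exact_mod_cast p.2.one_lt.le)
        have h2 : ‖x.1 p‖ ≤ 1 := hall p
        linarith
      · have hx1 : anorm x = norm1 x := if_neg hall
        rw [hx1]
        apply Real.iSup_le _ hr0.le
        intro p
        have h1 := hx p
        rw [hEE p] at h1
        refine h1.trans ?_
        have := zpow_le_rpow (p := p) (Int.floor_le (Real.logb p r))
        rwa [rpow_logb_self p hr0] at this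
  · -- r ≤ 1/2
    have hrlt1 : r < 1 := by linarith
    have hlogneg : ∀ p : Nat.Primes, Real.logb p r < 0 :=
      fun p => Real.logb_neg (one_lt_pR p) hr0 hrlt1
    have hEE : ∀ p : Nat.Primes, EE r p = ⌊Real.logb p r⌋ + 1 := by
      intro p
      unfold EE bb
      rw [if_neg (not_le.mpr (hlogneg p))]
    ext x
    simp only [Set.mem_setOf_eq, Bz]
    constructor
    · intro hx p
      have hall : ∀ q : Nat.Primes, ‖x.1 q‖ ≤ 1 := by
        by_contra h
        push_neg at h
        obtain ⟨q, hq⟩ := h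
        have hx1 : anorm x = norm1 x := if_neg (by push_neg; exact ⟨q, hq⟩)
        have h1 : ‖x.1 q‖ ≤ norm1 x := le_ciSup (bdd_norms x) q
        rw [hx1] at hx
        linarith
      have hx0 : anorm x = norm0 x := if_pos hall
      have h1 : ‖x.1 p‖ / p ≤ r := (le_ciSup (bdd_norms_div x) p).trans (hx0.symm.trans_le hx)
      have hppos : (0:ℝ) < (p:ℝ) := by exact_mod_cast p.2.pos
      have h2 : ‖x.1 p‖ ≤ (p:ℝ) ^ ((1 : ℝ) + Real.logb p r) := by
        rw [Real.rpow_add hppos, Real.rpow_one, rpow_logb_self p hr0]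
        rw [div_le_iff₀ hppos] at h1
        linarith [h1]
      have h3 := padic_norm_le_rpow h2
      rwa [add_comm, Int.floor_add_one, ← hEE p] at h3
    · intro hx
      have hall : ∀ q : Nat.Primes, ‖x.1 q‖ ≤ 1 := by
        intro q
        have h1 := hx q
        rw [hEE q] at h1
        have h2 : ⌊Real.logb q r⌋ + 1 ≤ 0 := by
          have h4 : ⌊Real.logb q r⌋ < 0 := Int.floor_lt.mpr (by simpa using hlogneg q)
          omega
        have h3 : ((q:ℝ)) ^ (⌊Real.logb q r⌋ + 1) ≤ (q:ℝ) ^ (0:ℤ) :=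
          zpow_le_zpow_right₀ (one_lt_pR q).le h2
        rw [zpow_zero] at h3
        linarith
      have hx0 : anorm x = norm0 x := if_pos hall
      rw [hx0]
      apply Real.iSup_le _ hr0.le
      intro p
      have h1 := hx p
      rw [hEE p] at h1
      have hppos : (0:ℝ) < (p:ℝ) := by exact_mod_cast p.2.pos
      have hp0 : ((p:ℝ)) ≠ 0 := hppos.ne'
      have h2 : ‖x.1 p‖ / p ≤ (p:ℝ) ^ (⌊Real.logb p r⌋ + 1) / p := by gcongr
      have h3 : ((p:ℝ)) ^ (⌊Real.logb p r⌋ + 1) / p = (p:ℝ) ^ (⌊Real.logb p r⌋) := by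
        rw [zpow_add_one₀ hp0, mul_div_assoc, div_self hp0, mul_one]
      rw [h3] at h2
      refine h2.trans ?_
      have := zpow_le_rpow (p := p) (Int.floor_le (Real.logb p r))
      rwa [rpow_logb_self p hr0] at this

lemma primes_le_finite (C : ℝ) : {p : Nat.Primes | (p:ℝ) ≤ C}.Finite := by
  have h : {p : Nat.Primes | (p:ℝ) ≤ C} ⊆ (fun p : Nat.Primes => (p : ℕ)) ⁻¹' (Set.Iic ⌊C⌋₊) := by
    intro p hp
    simp only [Set.mem_preimage, Set.mem_Iic]
    exact Nat.le_floor hp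
  exact Set.Finite.subset
    (Set.Finite.preimage (Set.injOn_of_injective Subtype.coe_injective) (Set.finite_Iic _)) h

lemma EE_support {r : ℝ} (hr : r ∈ Pset) {p : Nat.Primes} (hp : max r r⁻¹ < p) :
    EE r p = 0 := by
  obtain ⟨hr0, hcase⟩ := Pset_cases hr
  have hp1 : (1:ℝ) < (p:ℝ) := one_lt_pR p
  rcases hcase with hbig | hsmall
  · have hrp : r < (p:ℝ) := lt_of_le_of_lt (le_max_left _ _) hp
    have h1 : Real.logb p r < 1 := by
      rw [Real.logb_lt_iff_lt_rpow hp1 hr0, Real.rpow_one]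
      exact hrp
    have h2 : 0 ≤ Real.logb p r := Real.logb_nonneg hp1 (by linarith)
    unfold EE bb
    rw [if_pos h2, Int.floor_eq_zero_iff.mpr ⟨h2, h1⟩]
  · have hrp : r⁻¹ < (p:ℝ) := lt_of_le_of_lt (le_max_right _ _) hp
    have hpinv : ((p:ℝ))⁻¹ < r := (inv_lt_comm₀ (by linarith) hr0).mpr hrp
    have h1 : (-1 : ℝ) < Real.logb p r := by
      rw [Real.lt_logb_iff_rpow_lt hp1 hr0]
      rwa [Real.rpow_neg_one]
    have h2 : Real.logb p r < 0 := Real.logb_neg hp1 hr0 (by linarith)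
    have h3 : ⌊Real.logb p r⌋ = -1 := by
      rw [Int.floor_eq_iff]
      constructor
      · exact_mod_cast h1.le
      · push_cast
        linarith
    unfold EE bb
    rw [if_neg (not_le.mpr h2), h3]
    norm_num

/-- The canonical support finset for radius `r`. -/
def SS (r : ℝ) : Finset Nat.Primes := (primes_le_finite (max r r⁻¹)).toFinset

lemma SS_spec {r : ℝ} (hr : r ∈ Pset) : ∀ p ∉ SS r, EE r p = 0 := by
  intro p hp
  apply EE_support hr
  by_contra h
  push_neg at h
  exact hp ((primes_le_finite (max r r⁻¹)).mem_toFinset.2 h)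

lemma Phi_eq {r : ℝ} (hr : r ∈ Pset) :
    Phi r = ∏ p ∈ SS r, (p:ℝ) ^ (EE r p) := by
  apply finprod_eq_prod_of_mulSupport_subset
  intro p hp
  simp only [Function.mem_mulSupport] at hp
  by_contra hpS
  exact hp (by rw [show bb (Real.logb p r) = EE r p from rfl, SS_spec hr p hpS, zpow_zero])

lemma Phi_nonneg {r : ℝ} (hr : r ∈ Pset) : 0 ≤ Phi r := by
  rw [Phi_eq hr]
  exact Finset.prod_nonneg fun p _ => (ppow_pos p _).le

lemma meas_ball {r : ℝ} (hr : r ∈ Pset) (μ : Measure FA) (hinv : μ.IsAddLeftInvariant)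
    (hone : μ unitBall = 1) :
    μ {x : FA | anorm x ≤ r} = ENNReal.ofReal (Phi r) := by
  rw [ball_eq hr, measB μ hinv hone (SS r) (EE r) (SS_spec hr), ← Phi_eq hr]

lemma Pset_between_finite {c R : ℝ} (hc : 0 < c) : {m | m ∈ Pset ∧ c ≤ m ∧ m < R}.Finite := by
  classical
  set M : ℝ := max R c⁻¹ with hM
  have hM0 : 0 < M := lt_of_lt_of_le (inv_pos.mpr hc) (le_max_right _ _)
  set K : ℤ := ⌈Real.logb 2 M⌉ with hK
  set F : Finset (ℕ × ℤ) := Finset.range (⌊M⌋₊ + 1) ×ˢ Finset.Icc (-K) K with hF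
  apply Set.Finite.subset (F.finite_toSet.image (fun z : ℕ × ℤ => (z.1 : ℝ) ^ z.2))
  rintro m ⟨⟨p, j, hp, hj, rfl⟩, hcm, hmR⟩
  have hp1 : (1:ℝ) < p := by exact_mod_cast hp.one_lt
  have hp0 : (0:ℝ) < p := by linarith
  have hmM : (p:ℝ) ^ j ≤ M := le_trans hmR.le (le_max_left _ _)
  have hminvM : ((p:ℝ) ^ j)⁻¹ ≤ M := by
    have h1 : ((p:ℝ) ^ j)⁻¹ ≤ c⁻¹ := by
      apply inv_anti₀ hc hcm
    exact h1.trans (le_max_right _ _)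
  set n : ℕ := j.natAbs with hn
  have hpow : (p:ℝ) ^ n ≤ M := by
    rcases le_or_gt 0 j with hj0 | hj0
    · have h2 : (p:ℝ) ^ n = (p:ℝ) ^ j := by
        rw [← zpow_natCast]; congr 1; omega
      rw [h2]; exact hmM
    · have h2 : (p:ℝ) ^ n = ((p:ℝ) ^ j)⁻¹ := by
        rw [← zpow_natCast, ← zpow_neg]; congr 1; omega
      rw [h2]; exact hminvM
  refine ⟨(p, j), ?_, rfl⟩
  simp only [hF, Finset.coe_product, Set.mem_prod, Finset.mem_coe, Finset.mem_range,
    Finset.mem_Icc]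
  constructor
  · have hpM : (p:ℝ) ≤ M := by
      calc (p:ℝ) = (p:ℝ) ^ (1:ℕ) := (pow_one _).symm
        _ ≤ (p:ℝ) ^ n := pow_le_pow_right₀ hp1.le (by omega)
        _ ≤ M := hpow
    have := Nat.le_floor hpM
    omega
  · have h2n : (2:ℝ) ^ n ≤ M :=
      le_trans (pow_le_pow_left₀ (by norm_num) (by exact_mod_cast hp.two_le) n) hpow
    have hlogb : (n:ℝ) ≤ Real.logb 2 M := by
      rw [Real.le_logb_iff_rpow_le (by norm_num) hM0, Real.rpow_natCast]
      exact h2n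
    have hnK : (n:ℤ) ≤ K := by
      have h3 := hlogb.trans (Int.le_ceil _)
      exact_mod_cast h3
    constructor <;> omega

lemma nminus_spec {r : ℝ} (hr : r ∈ Pset) :
    nminus r ∈ Pset ∧ nminus r < r ∧ 0 < nminus r ∧
      ∀ m ∈ Pset, m < r → m ≤ nminus r := by
  obtain ⟨hr0, _⟩ := Pset_cases hr
  obtain ⟨q0, hq0big, hq0p⟩ := Nat.exists_infinite_primes (⌊r⁻¹⌋₊ + 2)
  have hq00 : (0:ℝ) < q0 := by exact_mod_cast hq0p.pos
  set m₀ : ℝ := (q0 : ℝ) ^ (-1 : ℤ) with hm₀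
  have hm₀P : m₀ ∈ Pset := ⟨q0, -1, hq0p, by norm_num, rfl⟩
  have hm₀0 : 0 < m₀ := zpow_pos hq00 _
  have hm₀r : m₀ < r := by
    have h1 : r⁻¹ < (q0:ℝ) := by
      have h2 : r⁻¹ < (⌊r⁻¹⌋₊ : ℝ) + 1 := Nat.lt_floor_add_one _
      have h3 : ((⌊r⁻¹⌋₊ : ℕ) : ℝ) + 2 ≤ (q0 : ℝ) := by exact_mod_cast hq0big
      linarith
    have h4 : ((q0:ℝ))⁻¹ < r := (inv_lt_comm₀ hq00 hr0).mpr h1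
    rw [hm₀, zpow_neg_one]
    exact h4
  set T := {m | m ∈ Pset ∧ m₀ ≤ m ∧ m < r} with hT
  have hTfin : T.Finite := Pset_between_finite hm₀0
  have hTne : T.Nonempty := ⟨m₀, hm₀P, le_refl _, hm₀r⟩
  obtain ⟨b, hbT, hbmax⟩ := Set.exists_max_image T id hTfin hTne
  have hub : ∀ s ∈ {m | m ∈ Pset ∧ m < r}, s ≤ b := by
    rintro s ⟨hsP, hsr⟩
    by_cases hs : m₀ ≤ s
    · exact hbmax s ⟨hsP, hs, hsr⟩
    · push_neg at hs
      exact hs.le.trans (hbmax m₀ ⟨hm₀P, le_refl _, hm₀r⟩)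
  have hbmem : b ∈ {m | m ∈ Pset ∧ m < r} := ⟨hbT.1, hbT.2.2⟩
  have hnm : nminus r = b := by
    unfold nminus
    exact le_antisymm (csSup_le ⟨m₀, hm₀P, hm₀r⟩ hub) (le_csSup ⟨b, hub⟩ hbmem)
  rw [hnm]
  exact ⟨hbT.1, hbT.2.2, lt_of_lt_of_le hm₀0 hbT.2.1, fun m hm hmr => hub m ⟨hm, hmr⟩⟩

lemma sup_attained (t : Nat.Primes → ℝ) (hb : BddAbove (Set.range t)) {c : ℝ}
    (hfin : {p | c ≤ t p}.Finite) (hex : ∃ p, c ≤ t p) :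
    ∃ q, (⨆ p, t p) = t q ∧ c ≤ t q := by
  obtain ⟨p₀, hp₀⟩ := hex
  obtain ⟨q, hqT, hqmax⟩ := Set.exists_max_image _ t hfin ⟨p₀, hp₀⟩
  refine ⟨q, le_antisymm (ciSup_le fun p => ?_) (le_ciSup hb q), hqT⟩
  by_cases hp : c ≤ t p
  · exact hqmax p hp
  · push_neg at hp
    exact hp.le.trans hqT

lemma anorm_mem {x : FA} (hx : anorm x ≠ 0) : anorm x ∈ Pset := by
  by_cases hall : ∀ q : Nat.Primes, ‖x.1 q‖ ≤ 1
  · have hx0 : anorm x = norm0 x := if_pos hall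
    have hpos : 0 < anorm x := lt_of_le_of_ne (anorm_nonneg x) (Ne.symm hx)
    have hex : ∃ p₀ : Nat.Primes, 0 < ‖x.1 p₀‖ / p₀ := by
      by_contra h
      push_neg at h
      have : anorm x ≤ 0 := by
        rw [hx0]
        exact Real.iSup_le (fun p => h p) le_rfl
      linarith
    obtain ⟨p₀, hp₀⟩ := hex
    have hfin : {p : Nat.Primes | ‖x.1 p₀‖ / p₀ ≤ ‖x.1 p‖ / p}.Finite := by
      apply Set.Finite.subset (primes_le_finite (‖x.1 p₀‖ / p₀)⁻¹)
      intro p hp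
      simp only [Set.mem_setOf_eq] at hp ⊢
      have hppos : (0:ℝ) < (p:ℝ) := by exact_mod_cast p.2.pos
      rw [le_div_iff₀ hppos] at hp
      have h1 : (‖x.1 p₀‖ / ↑↑p₀) * (p:ℝ) ≤ 1 := hp.trans (hall p)
      have h2 : (p:ℝ) ≤ 1 / (‖x.1 p₀‖ / ↑↑p₀) :=
        (le_div_iff₀ hp₀).mpr (by rw [mul_comm]; exact h1)
      simpa [one_div] using h2
    obtain ⟨q, hsup, hq⟩ := sup_attained _ (bdd_norms_div x) hfin ⟨p₀, le_refl _⟩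
    have hxq : x.1 q ≠ 0 := by
      intro h0
      rw [h0] at hq
      simp only [norm_zero, zero_div] at hq
      linarith
    have hval : ‖x.1 q‖ = (q:ℝ) ^ (-(x.1 q).valuation) := Padic.norm_eq_zpow_neg_valuation hxq
    have hq0 : ((q:ℝ)) ≠ 0 := (by exact_mod_cast q.2.pos : (0:ℝ) < (q:ℝ)).ne'
    have hvalue : anorm x = (q:ℝ) ^ (-(x.1 q).valuation - 1) := by
      rw [hx0]
      unfold norm0
      rw [hsup, hval, zpow_sub₀ hq0, zpow_one]
    refine ⟨q, -(x.1 q).valuation - 1, q.2, ?_, hvalue⟩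
    intro hzero
    have hv : (x.1 q).valuation = -1 := by omega
    have : ‖x.1 q‖ = (q:ℝ) ^ (1:ℤ) := by rw [hval, hv]; norm_num
    rw [zpow_one] at this
    have := hall q
    have hq1 : (1:ℝ) < (q:ℝ) := one_lt_pR q
    linarith [this, hq1, ‹‖x.1 q‖ = (q:ℝ)›]
  · have hx1 : anorm x = norm1 x := if_neg hall
    push_neg at hall
    obtain ⟨p₀, hp₀⟩ := hall
    have hfin : {p : Nat.Primes | ‖x.1 p₀‖ ≤ ‖x.1 p‖}.Finite := by
      apply Set.Finite.subset (badSet_finite x)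
      intro p hp
      simp only [Set.mem_setOf_eq] at hp ⊢
      intro h
      linarith
    obtain ⟨q, hsup, hq⟩ := sup_attained _ (bdd_norms x) hfin ⟨p₀, le_refl _⟩
    have hq1 : 1 < ‖x.1 q‖ := lt_of_lt_of_le hp₀ hq
    have hxq : x.1 q ≠ 0 := by
      intro h0
      rw [h0] at hq1
      simp at hq1
      linarith
    have hval : ‖x.1 q‖ = (q:ℝ) ^ (-(x.1 q).valuation) := Padic.norm_eq_zpow_neg_valuation hxq
    refine ⟨q, -(x.1 q).valuation, q.2, ?_, by rw [hx1]; unfold norm1; rw [hsup, hval]⟩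
    intro hzero
    rw [hval, hzero] at hq1
    norm_num at hq1

end S9
end Aux

theorem stmt_9' (μ : Measure FA) (hinv : μ.IsAddLeftInvariant) (hreg : μ.Regular)
    (hone : μ unitBall = 1)
    (r : ℝ) (hr : r ∈ Pset) :
    μ {x : FA | anorm x ≤ r} = ENNReal.ofReal (Phi r) ∧
    μ {x : FA | anorm x = r} = ENNReal.ofReal (Phi r - Phi (nminus r)) := by
  classical
  obtain ⟨hmP, hmlt, hm0, hub⟩ := S9.nminus_spec hr
  have hball := S9.meas_ball hr μ hinv hone
  have hballm := S9.meas_ball hmP μ hinv hone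
  refine ⟨hball, ?_⟩
  have hsub : {x : FA | anorm x ≤ nminus r} ⊆ {x : FA | anorm x ≤ r} :=
    fun x hx => le_trans hx hmlt.le
  have hmeasm : MeasurableSet {x : FA | anorm x ≤ nminus r} := by
    rw [S9.ball_eq hmP]
    exact (S9.isOpen_Bz _ (S9.SS (nminus r)) (S9.SS_spec hmP)).measurableSet
  have hsphere : {x : FA | anorm x = r}
      = {x : FA | anorm x ≤ r} \ {x : FA | anorm x ≤ nminus r} := by
    ext x
    simp only [Set.mem_setOf_eq, Set.mem_diff]
    constructor
    · intro h
      refine ⟨h.le, fun hle => absurd (h ▸ hle : r ≤ nminus r) (not_le.mpr hmlt)⟩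
    · rintro ⟨h1, h2⟩
      by_contra hne
      apply h2
      have hlt : anorm x < r := lt_of_le_of_ne h1 hne
      rcases eq_or_ne (anorm x) 0 with h0 | h0
      · rw [h0]; exact hm0.le
      · exact hub _ (S9.anorm_mem h0) hlt
  rw [hsphere, measure_diff hsub hmeasm.nullMeasurableSet
    (by rw [hballm]; exact ENNReal.ofReal_ne_top), hball, hballm,
    ← ENNReal.ofReal_sub _ (S9.Phi_nonneg hmP)]


/-- For the Haar measure on `𝔸_f` normalized by `μ(∏_p ℤ_p) = 1`, the ball of radius
`r ∈ P` has volume `Φ(r)` and the sphere of radius `r` has volume `Φ(r) − Φ(r₋)`. -/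
theorem stmt_9 (μ : Measure FA) (hinv : μ.IsAddLeftInvariant) (hreg : μ.Regular)
    (hone : μ unitBall = 1)
    (r : ℝ) (hr : r ∈ Pset) :
    μ {x : FA | anorm x ≤ r} = ENNReal.ofReal (Phi r) ∧
    μ {x : FA | anorm x = r} = ENNReal.ofReal (Phi r - Phi (nminus r)) :=
  stmt_9' μ hinv hreg hone r hr
end

section
/- If f : 𝔸_f → ℝ is an integrable radial non-increasing function (f(ξ) ≥ f(ζ) whenever ‖ξ‖ ≤ ‖ζ‖), then its inverse Fourier transform f̌(x) = ∫_{𝔸_f} χ(ξ·x) f(ξ) dξ is non-negative for every x ∈ 𝔸_f. -/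
open Filter MeasureTheory
open scoped Classical

noncomputable section AuxProofs
open Filter MeasureTheory
open scoped ENNReal NNReal
namespace AdeleAux
section PadicPart
variable {p : ℕ} [hp : Fact p.Prime]




lemma one_lt_p : (1:ℝ) < p := by exact_mod_cast hp.1.one_lt

lemma p_ne_zero_Q : ((p:ℚ_[p])) ≠ 0 := by
  exact_mod_cast (Nat.cast_ne_zero (R := ℚ_[p])).mpr hp.1.ne_zero

lemma padic_aux_norm (x : ℚ_[p]) : ‖(p : ℚ_[p]) ^ (-x.valuation).toNat * x‖ ≤ 1 := by
  rcases eq_or_ne x 0 with rfl | hx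
  · simp
  · set n := (-x.valuation).toNat with hn
    have hv : (-x.valuation) ≤ (n : ℤ) := Int.self_le_toNat _
    rw [norm_mul, norm_pow, Padic.norm_p, Padic.norm_eq_zpow_neg_valuation hx]
    have hp0 : (0:ℝ) < p := lt_trans one_pos one_lt_p
    have : ((p:ℝ))⁻¹ ^ n * (p:ℝ) ^ (-x.valuation) = (p:ℝ) ^ (-(n:ℤ) + (-x.valuation)) := by
      rw [zpow_add₀ (ne_of_gt hp0), ← zpow_natCast ((p:ℝ))⁻¹, inv_zpow, ← zpow_neg]
    rw [this]
    exact zpow_le_one_of_nonpos₀ (le_of_lt one_lt_p) (by omega)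

lemma padicFrac_spec (x : ℚ_[p]) :
    padicFrac x = ((PadicInt.appr (⟨_, padic_aux_norm x⟩ : ℤ_[p]) (-x.valuation).toNat : ℕ) : ℚ)
      / (p : ℚ) ^ (-x.valuation).toNat := by
  rw [padicFrac, dif_pos (padic_aux_norm x)]

lemma padicFrac_mul_pow_int (x : ℚ_[p]) :
    ∃ z : ℤ, padicFrac x * (p:ℚ) ^ (-x.valuation).toNat = z := by
  refine ⟨(PadicInt.appr (⟨_, padic_aux_norm x⟩ : ℤ_[p]) (-x.valuation).toNat : ℕ), ?_⟩
  rw [padicFrac_spec]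
  have : ((p:ℚ)) ^ (-x.valuation).toNat ≠ 0 :=
    pow_ne_zero _ (by exact_mod_cast hp.1.ne_zero)
  field_simp
  norm_cast

lemma norm_sub_padicFrac (x : ℚ_[p]) : ‖x - ((padicFrac x : ℚ) : ℚ_[p])‖ ≤ 1 := by
  set n := (-x.valuation).toNat with hn
  have h := padic_aux_norm x
  set z : ℤ_[p] := ⟨_, h⟩ with hz
  obtain ⟨u, hu⟩ := Ideal.mem_span_singleton'.mp (PadicInt.appr_spec n z)
  -- hu : u * p^n = z - appr z n  in ℤ_[p]
  have hu' : (u : ℚ_[p]) * (p:ℚ_[p])^n = (p:ℚ_[p])^n * x - ((PadicInt.appr z n : ℕ) : ℚ_[p]) := by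
    have hzval : ((z : ℤ_[p]) : ℚ_[p]) = (p:ℚ_[p])^n * x := rfl
    have h2 := congrArg (fun w : ℤ_[p] => (w : ℚ_[p])) hu
    push_cast at h2
    rw [← hzval]
    exact h2
  have hpn : ((p:ℚ_[p]))^n ≠ 0 := pow_ne_zero _ p_ne_zero_Q
  have hfrac : ((padicFrac x : ℚ) : ℚ_[p]) = ((PadicInt.appr z n : ℕ) : ℚ_[p]) / (p:ℚ_[p])^n := by
    rw [padicFrac_spec]
    push_cast
    rfl
  have key : x - ((padicFrac x : ℚ) : ℚ_[p]) = (u : ℚ_[p]) := by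
    rw [hfrac]
    field_simp
    linear_combination -hu'
  rw [key]
  exact u.2

lemma padicFrac_zero_of_norm_le_one {x : ℚ_[p]} (hx : ‖x‖ ≤ 1) : padicFrac x = 0 := by
  have hv : 0 ≤ x.valuation := (Padic.norm_le_one_iff_val_nonneg x).1 hx
  have hn : (-x.valuation).toNat = 0 := Int.toNat_eq_zero.mpr (by omega)
  rw [padicFrac]
  simp only [hn, pow_zero, one_mul]
  rw [dif_pos hx]
  norm_num [PadicInt.appr]




lemma rat_int_of_den_pow {q : ℚ} (N : ℕ) (hden : ∃ z : ℤ, q * (p:ℚ)^N = z)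
    (hq : ‖((q:ℚ) : ℚ_[p])‖ ≤ 1) : ∃ m : ℤ, q = (m : ℚ) := by
  obtain ⟨z, hz⟩ := hden
  have hpQ : ((p:ℚ))^N ≠ 0 := pow_ne_zero _ (by exact_mod_cast hp.1.ne_zero)
  have hq' : q = (z : ℚ) / (((p:ℤ)^N : ℤ) : ℚ) := by
    push_cast
    field_simp
    linarith [hz]
  have hdvd : (q.den : ℤ) ∣ (p:ℤ)^N := by
    have heq : q = Rat.divInt z ((p:ℤ)^N) := by rw [Rat.divInt_eq_div]; exact hq'
    rw [heq]
    exact Rat.den_dvd z ((p:ℤ)^N)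
  have hdvd' : q.den ∣ p^N := by exact_mod_cast hdvd
  obtain ⟨m, hmN, hden_eq⟩ := (Nat.dvd_prime_pow hp.1).mp hdvd'
  rcases Nat.eq_zero_or_pos m with hm0 | hmpos
  · refine ⟨q.num, ?_⟩
    have hd1 : q.den = 1 := by rw [hden_eq, hm0, pow_zero]
    exact ((Rat.den_eq_one_iff q).mp hd1).symm
  · exfalso
    have hpnum : ¬ ((p:ℤ) ∣ q.num) := by
      intro hd
      have h1 : p ∣ q.num.natAbs := Int.natCast_dvd_natCast.mp (by rwa [Int.dvd_natAbs])
      have h2 : p ∣ q.den := by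
        rw [hden_eq]; exact dvd_pow_self p hmpos.ne'
      have h3 : p ∣ 1 := q.reduced ▸ Nat.dvd_gcd h1 h2
      exact hp.1.one_lt.ne' (Nat.dvd_one.mp h3)
    have hnum_norm : ‖((q.num : ℤ) : ℚ_[p])‖ = 1 := by
      refine le_antisymm (Padic.norm_int_le_one _) ?_
      by_contra hlt
      push_neg at hlt
      exact hpnum (Padic.norm_intCast_lt_one_iff.mp hlt)
    have hden_norm : ‖((q.den : ℕ) : ℚ_[p])‖ = ((p:ℝ)) ^ (-(m:ℤ)) := by
      rw [hden_eq]
      push_cast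
      exact_mod_cast Padic.norm_p_pow m
    have hcast : ((q : ℚ) : ℚ_[p]) = ((q.num : ℤ) : ℚ_[p]) / ((q.den : ℕ) : ℚ_[p]) := by
      rw [Rat.cast_def]
    rw [hcast, norm_div, hnum_norm, hden_norm] at hq
    have hp1 : (1:ℝ) < p := one_lt_p
    have : (1:ℝ) < (p:ℝ) ^ (m:ℤ) := one_lt_zpow₀ hp1 (by exact_mod_cast hmpos)
    rw [zpow_neg] at hq
    rw [one_div, inv_inv] at hq
    linarith

lemma padicFrac_add_sub_int (a b : ℚ_[p]) :
    ∃ m : ℤ, (padicFrac a + padicFrac b - padicFrac (a+b) : ℚ) = (m : ℚ) := by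
  set q : ℚ := padicFrac a + padicFrac b - padicFrac (a+b) with hqdef
  obtain ⟨za, hza⟩ := padicFrac_mul_pow_int a
  obtain ⟨zb, hzb⟩ := padicFrac_mul_pow_int b
  obtain ⟨zc, hzc⟩ := padicFrac_mul_pow_int (a+b)
  set na := (-a.valuation).toNat
  set nb := (-b.valuation).toNat
  set nc := (-(a+b).valuation).toNat
  refine rat_int_of_den_pow (p := p) (na + nb + nc) ⟨za * (p:ℤ)^(nb+nc) + zb * (p:ℤ)^(na+nc)
    - zc * (p:ℤ)^(na+nb), ?_⟩ ?_
  · push_cast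
    rw [hqdef]
    simp only [pow_add]
    linear_combination (p:ℚ)^nb*(p:ℚ)^nc*hza + (p:ℚ)^na*(p:ℚ)^nc*hzb - (p:ℚ)^na*(p:ℚ)^nb*hzc
  · have hcast : ((q:ℚ) : ℚ_[p]) =
        (((padicFrac a : ℚ) : ℚ_[p]) - a) + (((padicFrac b : ℚ) : ℚ_[p]) - b)
          + ((a + b) - ((padicFrac (a+b) : ℚ) : ℚ_[p])) := by
      rw [hqdef]; push_cast; ring
    rw [hcast]
    refine le_trans (Padic.nonarchimedean _ _) (max_le (le_trans (Padic.nonarchimedean _ _) (max_le ?_ ?_)) ?_)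
    · rw [← norm_neg]; simpa using norm_sub_padicFrac a
    · rw [← norm_neg]; simpa using norm_sub_padicFrac b
    · exact norm_sub_padicFrac (a+b)

lemma padicFrac_sub_int_of_close {a b : ℚ_[p]} (h : ‖a - b‖ ≤ 1) :
    ∃ m : ℤ, (padicFrac a - padicFrac b : ℚ) = (m : ℚ) := by
  set q : ℚ := padicFrac a - padicFrac b with hqdef
  obtain ⟨za, hza⟩ := padicFrac_mul_pow_int a
  obtain ⟨zb, hzb⟩ := padicFrac_mul_pow_int b
  set na := (-a.valuation).toNat
  set nb := (-b.valuation).toNat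
  refine rat_int_of_den_pow (p := p) (na + nb) ⟨za * (p:ℤ)^nb - zb * (p:ℤ)^na, ?_⟩ ?_
  · push_cast
    rw [hqdef, pow_add]
    calc (padicFrac a - padicFrac b) * ((p:ℚ)^na * (p:ℚ)^nb)
        = (padicFrac a * (p:ℚ)^na) * (p:ℚ)^nb - (padicFrac b * (p:ℚ)^nb) * (p:ℚ)^na := by ring
      _ = (za:ℚ) * (p:ℚ)^nb - (zb:ℚ) * (p:ℚ)^na := by rw [hza, hzb]
  · have hcast : ((q:ℚ) : ℚ_[p]) =
        (((padicFrac a : ℚ) : ℚ_[p]) - a) + (a - b) + (b - ((padicFrac b : ℚ) : ℚ_[p])) := by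
      rw [hqdef]; push_cast; ring
    rw [hcast]
    refine le_trans (Padic.nonarchimedean _ _) (max_le (le_trans (Padic.nonarchimedean _ _) (max_le ?_ ?_)) ?_)
    · rw [← norm_neg]; simpa using norm_sub_padicFrac a
    · exact h
    · exact norm_sub_padicFrac b


end PadicPart

section NormPart

instance : Nonempty Nat.Primes := ⟨⟨2, Nat.prime_two⟩⟩

lemma p_one_le (p : Nat.Primes) : (1:ℝ) ≤ p.1 := by exact_mod_cast p.2.one_lt.le

lemma p_two_le (p : Nat.Primes) : (2:ℝ) ≤ p.1 := by exact_mod_cast p.2.two_le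

lemma fa_ev (x : FA) : ∀ᶠ p : Nat.Primes in Filter.cofinite, ‖x.1 p‖ ≤ 1 := x.2

lemma fa_finite_large (x : FA) : {p : Nat.Primes | 1 < ‖x.1 p‖}.Finite := by
  have h := Filter.eventually_cofinite.mp (fa_ev x)
  convert h using 1
  ext p
  simp [not_le]

lemma bdd1 (x : FA) : BddAbove (Set.range fun p : Nat.Primes => ‖x.1 p‖) := by
  have hfin := fa_finite_large x
  refine ⟨1 + ∑ p ∈ hfin.toFinset, ‖x.1 p‖, ?_⟩
  rintro r ⟨p, rfl⟩
  have hnn : (0:ℝ) ≤ ∑ q ∈ hfin.toFinset, ‖x.1 q‖ :=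
    Finset.sum_nonneg fun q _ => norm_nonneg _
  by_cases hp1 : 1 < ‖x.1 p‖
  · have hmem : p ∈ hfin.toFinset := hfin.mem_toFinset.mpr hp1
    have hle : ‖x.1 p‖ ≤ ∑ q ∈ hfin.toFinset, ‖x.1 q‖ :=
      Finset.single_le_sum (fun q _ => norm_nonneg _) hmem
    linarith
  · push_neg at hp1
    linarith

lemma bdd0 (x : FA) : BddAbove (Set.range fun p : Nat.Primes => ‖x.1 p‖ / p.1) := by
  obtain ⟨C, hC⟩ := bdd1 x
  refine ⟨C, ?_⟩
  rintro r ⟨p, rfl⟩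
  refine le_trans (div_le_self (norm_nonneg _) (p_one_le p)) (hC ⟨p, rfl⟩)

lemma le_norm1 (x : FA) (p : Nat.Primes) : ‖x.1 p‖ ≤ norm1 x :=
  le_ciSup (bdd1 x) p

lemma norm1_le {x : FA} {c : ℝ} (h : ∀ p, ‖x.1 p‖ ≤ c) : norm1 x ≤ c :=
  ciSup_le h

lemma le_norm0 (x : FA) (p : Nat.Primes) : ‖x.1 p‖ / p.1 ≤ norm0 x :=
  le_ciSup (bdd0 x) p

lemma norm0_le {x : FA} {c : ℝ} (h : ∀ p, ‖x.1 p‖ / p.1 ≤ c) : norm0 x ≤ c :=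
  ciSup_le h

lemma norm0_le_half (x : FA) (h : ∀ p, ‖x.1 p‖ ≤ 1) : norm0 x ≤ 1/2 := by
  refine norm0_le fun p => ?_
  have h2 : (2:ℝ) ≤ p.1 := p_two_le p
  rw [div_le_iff₀ (by linarith : (0:ℝ) < p.1)]
  calc ‖x.1 p‖ ≤ 1 := h p
    _ ≤ 1/2 * p.1 := by linarith

lemma anorm_nonneg (x : FA) : 0 ≤ anorm x := by
  rw [anorm]
  split_ifs with h
  · exact le_trans (div_nonneg (norm_nonneg _) (by linarith [p_one_le ⟨2, Nat.prime_two⟩] :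
      (0:ℝ) ≤ ((⟨2, Nat.prime_two⟩ : Nat.Primes) : ℕ))) (le_norm0 x ⟨2, Nat.prime_two⟩)
  · exact le_trans (norm_nonneg _) (le_norm1 x ⟨2, Nat.prime_two⟩)

lemma anorm_le_half {x : FA} (h : ∀ p, ‖x.1 p‖ ≤ 1) : anorm x ≤ 1/2 := by
  rw [anorm, if_pos h]; exact norm0_le_half x h

lemma one_lt_anorm {x : FA} (h : ¬ ∀ p, ‖x.1 p‖ ≤ 1) : 1 < anorm x := by
  rw [anorm, if_neg h]
  push_neg at h
  obtain ⟨q, hq⟩ := h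
  exact lt_of_lt_of_le hq (le_norm1 x q)

lemma anorm_zero : anorm (0 : FA) = 0 := by
  have hco : ∀ p : Nat.Primes, ((0:FA)).1 p = 0 := fun p => rfl
  rw [anorm, if_pos (fun p => by rw [hco p]; simp)]
  have : ∀ p : Nat.Primes, ‖((0:FA)).1 p‖ / p.1 = 0 := fun p => by rw [hco p]; simp
  rw [norm0]
  simp only [this]
  exact ciSup_const

lemma anorm_neg (x : FA) : anorm (-x) = anorm x := by
  have hco : ∀ p : Nat.Primes, ‖(-x).1 p‖ = ‖x.1 p‖ := fun p => norm_neg _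
  rw [anorm, anorm]
  have hcond : (∀ p, ‖(-x).1 p‖ ≤ 1) ↔ (∀ p, ‖x.1 p‖ ≤ 1) := by
    constructor <;> intro h p <;> [rw [← hco p]; rw [hco p]] <;> exact h p
  have h0 : norm0 (-x) = norm0 x := by
    rw [norm0, norm0]; exact iSup_congr fun p => by rw [hco p]
  have h1 : norm1 (-x) = norm1 x := by
    rw [norm1, norm1]; exact iSup_congr fun p => by rw [hco p]
  rw [h0, h1]
  by_cases h : ∀ p, ‖x.1 p‖ ≤ 1
  · rw [if_pos (hcond.mpr h), if_pos h]
  · rw [if_neg (fun hc => h (hcond.mp hc)), if_neg h]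

lemma coord_add (x y : FA) (p : Nat.Primes) : (x + y).1 p = x.1 p + y.1 p := rfl

lemma coord_nonarch (x y : FA) (p : Nat.Primes) :
    ‖(x + y).1 p‖ ≤ max ‖x.1 p‖ ‖y.1 p‖ := by
  rw [coord_add]
  exact Padic.nonarchimedean _ _

lemma anorm_add_le (x y : FA) : anorm (x + y) ≤ max (anorm x) (anorm y) := by
  by_cases hxy : ∀ p, ‖(x+y).1 p‖ ≤ 1
  · rw [anorm, if_pos hxy]
    by_cases hx : ∀ p, ‖x.1 p‖ ≤ 1
    · by_cases hy : ∀ p, ‖y.1 p‖ ≤ 1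
      · have hax : anorm x = norm0 x := by rw [anorm, if_pos hx]
        have hay : anorm y = norm0 y := by rw [anorm, if_pos hy]
        refine norm0_le fun p => ?_
        have hp0 : (0:ℝ) < p.1 := by linarith [p_one_le p]
        have h1 : ‖(x+y).1 p‖ / p.1 ≤ max (‖x.1 p‖ / p.1) (‖y.1 p‖ / p.1) := by
          rw [max_div_div_right hp0.le]
          exact (div_le_div_iff_of_pos_right hp0).mpr (coord_nonarch x y p)
        refine le_trans h1 ?_
        rw [hax, hay]
        exact max_le_max (le_norm0 x p) (le_norm0 y p)
      · have h1 := one_lt_anorm hy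
        have h2 := norm0_le_half (x+y) hxy
        calc norm0 (x+y) ≤ 1/2 := h2
          _ ≤ anorm y := by linarith
          _ ≤ max (anorm x) (anorm y) := le_max_right _ _
    · have h1 := one_lt_anorm hx
      have h2 := norm0_le_half (x+y) hxy
      calc norm0 (x+y) ≤ 1/2 := h2
        _ ≤ anorm x := by linarith
        _ ≤ max (anorm x) (anorm y) := le_max_left _ _
  · rw [anorm, if_neg hxy]
    refine norm1_le fun p => ?_
    refine le_trans (coord_nonarch x y p) ?_
    by_cases hx : ∀ q, ‖x.1 q‖ ≤ 1
    · by_cases hy : ∀ q, ‖y.1 q‖ ≤ 1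
      · exact absurd (fun q => le_trans (coord_nonarch x y q) (max_le (hx q) (hy q))) hxy
      · have hay : 1 < anorm y := one_lt_anorm hy
        have hy1 : anorm y = norm1 y := by rw [anorm, if_neg hy]
        refine max_le ?_ ?_
        · exact le_trans (hx p) (le_trans hay.le (le_max_right _ _))
        · exact le_trans (hy1 ▸ le_norm1 y p) (le_max_right _ _)
    · have hax : 1 < anorm x := one_lt_anorm hx
      have hx1 : anorm x = norm1 x := by rw [anorm, if_neg hx]
      by_cases hy : ∀ q, ‖y.1 q‖ ≤ 1
      · refine max_le ?_ ?_
        · exact le_trans (hx1 ▸ le_norm1 x p) (le_max_left _ _)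
        · exact le_trans (hy p) (le_trans hax.le (le_max_left _ _))
      · have hay : 1 < anorm y := one_lt_anorm hy
        have hy1 : anorm y = norm1 y := by rw [anorm, if_neg hy]
        refine max_le ?_ ?_
        · exact le_trans (hx1 ▸ le_norm1 x p) (le_max_left _ _)
        · exact le_trans (hy1 ▸ le_norm1 y p) (le_max_right _ _)

end NormPart

section TopPart

lemma gen_open {S : Finset Nat.Primes} {U : Π p : Nat.Primes, Set ℚ_[p.1]}
    (hU : ∀ p, IsOpen (U p)) :
    IsOpen {x : FA | (∀ p ∈ S, x.1 p ∈ U p) ∧ ∀ p ∉ S, ‖x.1 p‖ ≤ 1} :=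
  TopologicalSpace.isOpen_generateFrom_of_mem ⟨S, U, hU, rfl⟩

lemma qp_ball_open {p : ℕ} [Fact p.Prime] (c : ℚ_[p]) {r : ℝ} (hr : 0 < r) :
    IsOpen {y : ℚ_[p] | ‖y - c‖ ≤ r} := by
  rw [Metric.isOpen_iff]
  intro y0 hy0
  refine ⟨r, hr, fun z hz => ?_⟩
  rw [Metric.mem_ball, dist_eq_norm] at hz
  have : z - c = (z - y0) + (y0 - c) := by ring
  simp only [Set.mem_setOf_eq] at hy0 ⊢
  rw [this]
  exact le_trans (Padic.nonarchimedean _ _) (max_le hz.le hy0)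

lemma setOpen_of_radii (r : Nat.Primes → ℝ) (h0 : ∀ p, 0 < r p)
    (h1 : {p | r p < 1}.Finite) : IsOpen {x : FA | ∀ p, ‖x.1 p‖ ≤ r p} := by
  rw [isOpen_iff_forall_mem_open]
  intro x0 hx0
  have hT : ({p : Nat.Primes | 1 < ‖x0.1 p‖} ∪ {p | r p < 1}).Finite :=
    (fa_finite_large x0).union h1
  refine ⟨{x : FA | (∀ p ∈ hT.toFinset, x.1 p ∈ {y : ℚ_[p.1] | ‖y - 0‖ ≤ r p}) ∧
      ∀ p ∉ hT.toFinset, ‖x.1 p‖ ≤ 1}, ?_, ?_, ?_⟩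
  · intro x hx p
    by_cases hp : p ∈ hT.toFinset
    · have := hx.1 p hp
      simpa using this
    · have h2 : ¬ (r p < 1) := by
        intro hr1
        exact hp (hT.mem_toFinset.mpr (Or.inr hr1))
      exact le_trans (hx.2 p hp) (not_lt.mp h2)
  · exact gen_open fun p => qp_ball_open 0 (h0 p)
  · constructor
    · intro p _
      simpa using hx0 p
    · intro p hp
      have h2 : ¬ (1 < ‖x0.1 p‖) := by
        intro hr1
        exact hp (hT.mem_toFinset.mpr (Or.inl hr1))
      exact not_lt.mp h2

lemma anorm_le_iff_lt_one {x : FA} {c : ℝ} (h0 : 0 < c) (h1 : c < 1) :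
    anorm x ≤ c ↔ ∀ p, ‖x.1 p‖ ≤ min 1 (c * p.1) := by
  constructor
  · intro h p
    have hP : ∀ q, ‖x.1 q‖ ≤ 1 := by
      by_contra hP
      exact absurd h (not_le.mpr (lt_of_lt_of_le h1 (le_of_lt (one_lt_anorm hP))))
    have hp0 : (0:ℝ) < p.1 := by linarith [p_one_le p]
    refine le_min (hP p) ?_
    rw [anorm, if_pos hP] at h
    have h2 : ‖x.1 p‖ / p.1 ≤ c := le_trans (le_norm0 x p) h
    rw [div_le_iff₀ hp0] at h2
    linarith
  · intro h
    have hP : ∀ q, ‖x.1 q‖ ≤ 1 := fun q => le_trans (h q) (min_le_left _ _)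
    rw [anorm, if_pos hP]
    refine norm0_le fun p => ?_
    have hp0 : (0:ℝ) < p.1 := by linarith [p_one_le p]
    rw [div_le_iff₀ hp0]
    exact le_trans (h p) (min_le_right _ _)

lemma anorm_le_iff_ge_one {x : FA} {c : ℝ} (h1 : 1 ≤ c) :
    anorm x ≤ c ↔ ∀ p, ‖x.1 p‖ ≤ c := by
  constructor
  · intro h p
    by_cases hP : ∀ q, ‖x.1 q‖ ≤ 1
    · exact le_trans (hP p) h1
    · rw [anorm, if_neg hP] at h
      exact le_trans (le_norm1 x p) h
  · intro h
    by_cases hP : ∀ q, ‖x.1 q‖ ≤ 1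
    · exact le_trans (anorm_le_half hP) (by linarith)
    · rw [anorm, if_neg hP]
      exact norm1_le h

lemma isOpen_anorm_ball {c : ℝ} (hc : 0 < c) : IsOpen {x : FA | anorm x ≤ c} := by
  rcases lt_or_ge c 1 with h1 | h1
  · have heq : {x : FA | anorm x ≤ c} = {x : FA | ∀ p, ‖x.1 p‖ ≤ min 1 (c * p.1)} := by
      ext x; exact anorm_le_iff_lt_one hc h1
    rw [heq]
    refine setOpen_of_radii _
      (fun p => lt_min one_pos (mul_pos hc (by linarith [p_one_le p]))) ?_
    have hsub : {p : Nat.Primes | min 1 (c * p.1) < 1} ⊆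
        (fun p : Nat.Primes => (p.1 : ℕ)) ⁻¹' (Set.Iio (Nat.ceil (1/c) + 1)) := by
      intro p hp
      simp only [Set.mem_setOf_eq] at hp
      have hcp : c * p.1 < 1 := by
        rcases min_lt_iff.mp hp with h | h
        · linarith
        · exact h
      have hpr : (p.1:ℝ) < 1/c := by
        rw [lt_div_iff₀ hc]
        linarith [mul_comm c (p.1:ℝ)]
      have h3 : (p.1:ℝ) ≤ (Nat.ceil (1/c) : ℝ) := le_trans hpr.le (Nat.le_ceil _)
      simp only [Set.mem_preimage, Set.mem_Iio]
      have h4 : p.1 ≤ Nat.ceil (1/c) := by exact_mod_cast h3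
      omega
    exact Set.Finite.subset (Set.Finite.preimage
      (Set.injOn_of_injective (fun a b h => Subtype.ext h)) (Set.finite_Iio _)) hsub
  · have heq : {x : FA | anorm x ≤ c} = {x : FA | ∀ p, ‖x.1 p‖ ≤ (fun _ => c) p} := by
      ext x; exact anorm_le_iff_ge_one h1
    rw [heq]
    refine setOpen_of_radii _ (fun p => lt_of_lt_of_le one_pos h1) ?_
    have : {p : Nat.Primes | c < 1} = ∅ := by
      ext p; simp only [Set.mem_setOf_eq, Set.mem_empty_iff_false, iff_false, not_lt]; exact h1
    rw [this]; exact Set.finite_empty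

lemma measurableSet_anorm_ball (c : ℝ) : MeasurableSet {x : FA | anorm x ≤ c} := by
  rcases lt_trichotomy c 0 with h | rfl | h
  · have heq : {x : FA | anorm x ≤ c} = ∅ := by
      ext x
      simp only [Set.mem_setOf_eq, Set.mem_empty_iff_false, iff_false, not_le]
      exact lt_of_lt_of_le h (anorm_nonneg x)
    rw [heq]; exact MeasurableSet.empty
  · have heq : {x : FA | anorm x ≤ 0} = ⋂ n : ℕ, {x : FA | anorm x ≤ 1/(n+1)} := by
      ext x
      simp only [Set.mem_setOf_eq, Set.mem_iInter]
      constructor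
      · intro h n; exact le_trans h (by positivity)
      · intro h
        by_contra hpos
        rw [not_le] at hpos
        obtain ⟨n, hn⟩ := exists_nat_gt (1 / anorm x)
        have hc : 1 / ((n:ℝ)+1) < anorm x := by
          rw [div_lt_iff₀ (by positivity)]
          rw [div_lt_iff₀ hpos] at hn
          nlinarith [anorm_nonneg x]
        exact absurd (h n) (not_le.mpr hc)
    rw [heq]
    exact MeasurableSet.iInter fun n => (isOpen_anorm_ball (by positivity)).measurableSet
  · exact (isOpen_anorm_ball h).measurableSet

lemma measurableSet_of_downClosed {D : Set FA}
    (hD : ∀ ξ ζ : FA, anorm ξ ≤ anorm ζ → ζ ∈ D → ξ ∈ D) : MeasurableSet D := by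
  by_cases hne : D.Nonempty
  · by_cases hbd : BddAbove (anorm '' D)
    · set r := sSup (anorm '' D) with hr
      by_cases hatt : ∃ ζ ∈ D, anorm ζ = r
      · have heq : D = {x : FA | anorm x ≤ r} := by
          ext x
          constructor
          · intro hx; exact le_csSup hbd ⟨x, hx, rfl⟩
          · intro hx
            obtain ⟨ζ, hζD, hζr⟩ := hatt
            exact hD x ζ (hζr ▸ hx) hζD
        rw [heq]; exact measurableSet_anorm_ball r
      · have heq : D = ⋃ (q : ℚ) (_ : (q:ℝ) < r), {x : FA | anorm x ≤ (q:ℝ)} := by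
          ext x
          simp only [Set.mem_iUnion, Set.mem_setOf_eq]
          constructor
          · intro hx
            have hlt : anorm x < r :=
              lt_of_le_of_ne (le_csSup hbd ⟨x, hx, rfl⟩) (fun he => hatt ⟨x, hx, he⟩)
            obtain ⟨q, hq1, hq2⟩ := exists_rat_btwn hlt
            exact ⟨q, hq2, hq1.le⟩
          · rintro ⟨q, hq, hxq⟩
            obtain ⟨a, ⟨ζ, hζD, rfl⟩, hqa⟩ := exists_lt_of_lt_csSup (hne.image anorm) hq
            exact hD x ζ (le_trans hxq hqa.le) hζD
        rw [heq]
        exact MeasurableSet.iUnion fun q => MeasurableSet.iUnion fun _ => measurableSet_anorm_ball _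
    · have heq : D = Set.univ := by
        ext x
        simp only [Set.mem_univ, iff_true]
        obtain ⟨a, ⟨ζ, hζD, rfl⟩, hxa⟩ :=
          not_bddAbove_iff.mp hbd (anorm x)
        exact hD x ζ hxa.le hζD
      rw [heq]; exact MeasurableSet.univ
  · rw [Set.not_nonempty_iff_eq_empty] at hne
    rw [hne]; exact MeasurableSet.empty

lemma unitBall_eq : unitBall = {x : FA | anorm x ≤ 1/2} := by
  ext x
  constructor
  · intro h; exact anorm_le_half h
  · intro h
    by_contra hP
    have hx : ¬ ∀ p, ‖x.1 p‖ ≤ 1 := hP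
    have := one_lt_anorm hx
    simp only [Set.mem_setOf_eq] at h
    linarith

lemma measurableSet_unitBall : MeasurableSet unitBall := by
  rw [unitBall_eq]; exact measurableSet_anorm_ball _

end TopPart

section TransPart

lemma continuous_add_left_FA (a : FA) : Continuous (fun x : FA => a + x) := by
  have : (instTopologicalSpaceFA : TopologicalSpace FA) = TopologicalSpace.generateFrom
      { B | ∃ (S : Finset Nat.Primes) (U : Π p : Nat.Primes, Set ℚ_[p.1]),
        (∀ p, IsOpen (U p)) ∧
        B = {x : FA | (∀ p ∈ S, x.1 p ∈ U p) ∧ ∀ p ∉ S, ‖x.1 p‖ ≤ 1} } := rfl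
  rw [this, continuous_generateFrom_iff]
  rintro B ⟨S, U, hU, rfl⟩
  rw [isOpen_iff_forall_mem_open]
  intro x0 hx0
  simp only [Set.mem_preimage, Set.mem_setOf_eq] at hx0
  have hT : {p : Nat.Primes | 1 < ‖a.1 p‖}.Finite := fa_finite_large a
  set S' : Finset Nat.Primes := S ∪ hT.toFinset with hS'
  set U' : Π p : Nat.Primes, Set ℚ_[p.1] := fun p =>
    {y : ℚ_[p.1] | (p ∈ S → a.1 p + y ∈ U p) ∧ (p ∉ S → ‖a.1 p + y‖ ≤ 1)} with hU'
  have hU'open : ∀ p, IsOpen (U' p) := by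
    intro p
    by_cases hp : p ∈ S
    · have : U' p = (fun y : ℚ_[p.1] => a.1 p + y) ⁻¹' (U p) := by
        ext y; simp [hU', hp]
      rw [this]
      exact (hU p).preimage (continuous_add_left _)
    · have : U' p = {y : ℚ_[p.1] | ‖y - (-(a.1 p))‖ ≤ 1} := by
        ext y
        simp only [hU', Set.mem_setOf_eq, sub_neg_eq_add]
        constructor
        · intro h; rw [add_comm]; exact h.2 hp
        · intro h; exact ⟨fun hc => absurd hc hp, fun _ => by rw [add_comm] at h; exact h⟩
      rw [this]
      exact qp_ball_open _ one_pos
  refine ⟨{x : FA | (∀ p ∈ S', x.1 p ∈ U' p) ∧ ∀ p ∉ S', ‖x.1 p‖ ≤ 1}, ?_, gen_open hU'open, ?_, ?_⟩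
  · intro x hx
    simp only [Set.mem_preimage, Set.mem_setOf_eq]
    constructor
    · intro p hp
      have hps' : p ∈ S' := Finset.mem_union_left _ hp
      exact ((hx.1 p hps').1) hp
    · intro p hp
      by_cases hps' : p ∈ S'
      · exact (hx.1 p hps').2 hp
      · have hpa : ‖a.1 p‖ ≤ 1 := by
          have : p ∉ hT.toFinset := fun hc => hps' (Finset.mem_union_right _ hc)
          rw [hT.mem_toFinset] at this
          exact not_lt.mp this
        have hxp : ‖x.1 p‖ ≤ 1 := hx.2 p hps'
        calc ‖a.1 p + x.1 p‖ ≤ max ‖a.1 p‖ ‖x.1 p‖ := Padic.nonarchimedean _ _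
          _ ≤ 1 := max_le hpa hxp
  · intro p hp
    exact ⟨fun hps => hx0.1 p hps, fun hps => hx0.2 p hps⟩
  · intro p hp
    have hps : p ∉ S := fun hc => hp (Finset.mem_union_left _ hc)
    have hpa : ‖a.1 p‖ ≤ 1 := by
      have : p ∉ hT.toFinset := fun hc => hp (Finset.mem_union_right _ hc)
      rw [hT.mem_toFinset] at this
      exact not_lt.mp this
    have h1 : ‖a.1 p + x0.1 p‖ ≤ 1 := hx0.2 p hps
    have : x0.1 p = (a.1 p + x0.1 p) + (-(a.1 p)) := by ring
    rw [this]
    calc ‖(a.1 p + x0.1 p) + (-(a.1 p))‖ ≤ max ‖a.1 p + x0.1 p‖ ‖-(a.1 p)‖ :=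
        Padic.nonarchimedean _ _
      _ ≤ 1 := max_le h1 (by rwa [norm_neg])

instance : MeasurableAdd FA := by
  constructor
  · intro c
    exact (continuous_add_left_FA c).measurable
  · intro c
    have : (fun x : FA => x + c) = (fun x : FA => c + x) := by
      funext x; rw [add_comm]
    rw [this]
    exact (continuous_add_left_FA c).measurable

end TransPart

section CharPart

def efrac {p : ℕ} [Fact p.Prime] (y : ℚ_[p]) : ℂ :=
  Complex.exp (-(2 * Real.pi * (padicFrac y : ℝ) : ℝ) * Complex.I)

lemma achar_eq (x : FA) : achar x = ∏ᶠ p : Nat.Primes, efrac (x.1 p) :=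
  finprod_congr fun p => rfl

lemma exp_two_pi_eq {r s : ℚ} (m : ℤ) (hm : r - s = (m:ℚ)) :
    Complex.exp (-(2 * Real.pi * (r:ℝ) : ℝ) * Complex.I)
      = Complex.exp (-(2 * Real.pi * (s:ℝ) : ℝ) * Complex.I) := by
  have hr : (r:ℝ) = (s:ℝ) + (m:ℝ) := by
    have h : r = s + (m:ℚ) := by linarith
    exact_mod_cast h
  have harg : (-(2 * Real.pi * (r:ℝ) : ℝ) * Complex.I : ℂ)
      = (-(2 * Real.pi * (s:ℝ) : ℝ) * Complex.I : ℂ)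
        + ((-m : ℤ) : ℂ) * (2 * (Real.pi : ℂ) * Complex.I) := by
    push_cast [hr]
    ring
  rw [harg, Complex.exp_add, Complex.exp_int_mul_two_pi_mul_I, mul_one]

variable {p : ℕ} [hp : Fact p.Prime]

lemma efrac_congr {a b : ℚ_[p]} (h : ‖a - b‖ ≤ 1) : efrac a = efrac b := by
  obtain ⟨m, hm⟩ := padicFrac_sub_int_of_close h
  exact exp_two_pi_eq m hm

lemma efrac_one {y : ℚ_[p]} (h : ‖y‖ ≤ 1) : efrac y = 1 := by
  rw [efrac, padicFrac_zero_of_norm_le_one h]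
  simp

lemma efrac_add (a b : ℚ_[p]) : efrac (a + b) = efrac a * efrac b := by
  obtain ⟨m, hm⟩ := padicFrac_add_sub_int a b
  simp only [efrac]
  rw [← exp_two_pi_eq m hm, ← Complex.exp_add]
  congr 1
  push_cast
  ring

lemma efrac_abs (y : ℚ_[p]) : ‖efrac y‖ = 1 := by
  rw [efrac, Complex.norm_exp]
  simp

lemma achar_mulsupp_finite (x : FA) :
    (Function.mulSupport fun p : Nat.Primes => efrac (x.1 p)).Finite := by
  refine Set.Finite.subset (fa_finite_large x) ?_
  intro p hp
  rw [Function.mem_mulSupport] at hp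
  by_contra h
  rw [Set.mem_setOf_eq, not_lt] at h
  exact hp (efrac_one h)

lemma achar_add (u v : FA) : achar (u + v) = achar u * achar v := by
  rw [achar_eq, achar_eq, achar_eq]
  have h1 : ∀ p : Nat.Primes, efrac ((u+v).1 p) = efrac (u.1 p) * efrac (v.1 p) := fun p => by
    rw [coord_add]
    exact efrac_add _ _
  rw [finprod_congr h1]
  exact finprod_mul_distrib (achar_mulsupp_finite u) (achar_mulsupp_finite v)

lemma achar_congr_close {u v : FA} (h : ∀ p, ‖u.1 p - v.1 p‖ ≤ 1) : achar u = achar v := by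
  rw [achar_eq, achar_eq]
  exact finprod_congr fun p => efrac_congr (h p)

lemma achar_abs (x : FA) : ‖achar x‖ = 1 := by
  rw [achar_eq, finprod_eq_prod _ (achar_mulsupp_finite x)]
  rw [norm_prod]
  refine Finset.prod_eq_one fun q _ => efrac_abs _

lemma coord_mul (x y : FA) (p : Nat.Primes) : (x*y).1 p = x.1 p * y.1 p := rfl

lemma coord_sub (x y : FA) (p : Nat.Primes) : (x - y).1 p = x.1 p - y.1 p := rfl

lemma continuous_achar_mul (x : FA) : Continuous (fun ξ : FA => achar (ξ * x)) := by
  rw [continuous_iff_continuousAt]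
  intro ξ0
  have hT : ({p : Nat.Primes | 1 < ‖ξ0.1 p‖} ∪ {p | 1 < ‖x.1 p‖}).Finite :=
    (fa_finite_large ξ0).union (fa_finite_large x)
  set r : ∀ p : Nat.Primes, ℝ := fun p => if 1 < ‖x.1 p‖ then ‖x.1 p‖⁻¹ else 1 with hrdef
  have hrpos : ∀ p, 0 < r p := by
    intro p
    show (0:ℝ) < if 1 < ‖x.1 p‖ then ‖x.1 p‖⁻¹ else 1
    split_ifs with h
    · exact inv_pos.mpr (lt_trans one_pos h)
    · exact one_pos
  set B : Set FA := {ξ : FA | (∀ p ∈ hT.toFinset, ξ.1 p ∈ {y : ℚ_[p.1] | ‖y - ξ0.1 p‖ ≤ r p})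
      ∧ ∀ p ∉ hT.toFinset, ‖ξ.1 p‖ ≤ 1} with hBdef
  have hBopen : IsOpen B := gen_open fun p => qp_ball_open _ (hrpos p)
  have hmem : ξ0 ∈ B := by
    constructor
    · intro p _
      simp only [Set.mem_setOf_eq, sub_self, norm_zero]
      exact (hrpos p).le
    · intro p hps
      have : p ∉ ({q : Nat.Primes | 1 < ‖ξ0.1 q‖} : Set Nat.Primes) := fun hc =>
        hps (hT.mem_toFinset.mpr (Or.inl hc))
      exact not_lt.mp this
  have hconst : ∀ ξ ∈ B, achar (ξ * x) = achar (ξ0 * x) := by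
    intro ξ hξ
    refine achar_congr_close fun p => ?_
    have hcalc : (ξ * x).1 p - (ξ0 * x).1 p = (ξ.1 p - ξ0.1 p) * x.1 p := by
      rw [coord_mul, coord_mul]
      ring
    rw [hcalc, norm_mul]
    by_cases hps : p ∈ hT.toFinset
    · have h1 : ‖ξ.1 p - ξ0.1 p‖ ≤ (if 1 < ‖x.1 p‖ then ‖x.1 p‖⁻¹ else 1) := hξ.1 p hps
      split_ifs at h1 with h2
      · calc ‖ξ.1 p - ξ0.1 p‖ * ‖x.1 p‖ ≤ ‖x.1 p‖⁻¹ * ‖x.1 p‖ :=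
            mul_le_mul_of_nonneg_right h1 (norm_nonneg _)
          _ = 1 := inv_mul_cancel₀ (by positivity)
      · rw [not_lt] at h2
        calc ‖ξ.1 p - ξ0.1 p‖ * ‖x.1 p‖ ≤ 1 * 1 :=
            mul_le_mul h1 h2 (norm_nonneg _) zero_le_one
          _ = 1 := one_mul 1
    · have hξp : ‖ξ.1 p‖ ≤ 1 := hξ.2 p hps
      have hξ0p : ‖ξ0.1 p‖ ≤ 1 := by
        have : p ∉ ({q : Nat.Primes | 1 < ‖ξ0.1 q‖} : Set Nat.Primes) := fun hc =>
          hps (hT.mem_toFinset.mpr (Or.inl hc))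
        exact not_lt.mp this
      have hxp : ‖x.1 p‖ ≤ 1 := by
        have : p ∉ ({q : Nat.Primes | 1 < ‖x.1 q‖} : Set Nat.Primes) := fun hc =>
          hps (hT.mem_toFinset.mpr (Or.inr hc))
        exact not_lt.mp this
      have hsub : ‖ξ.1 p - ξ0.1 p‖ ≤ 1 := by
        rw [sub_eq_add_neg]
        refine le_trans (Padic.nonarchimedean _ _) (max_le hξp ?_)
        rwa [norm_neg]
      calc ‖ξ.1 p - ξ0.1 p‖ * ‖x.1 p‖ ≤ 1 * 1 :=
          mul_le_mul hsub hxp (norm_nonneg _) zero_le_one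
        _ = 1 := one_mul 1
  have hev : (fun ξ : FA => achar (ξ * x)) =ᶠ[nhds ξ0] (fun _ => achar (ξ0 * x)) :=
    Filter.eventuallyEq_of_mem (hBopen.mem_nhds hmem) hconst
  exact ContinuousAt.congr (continuousAt_const :
    ContinuousAt (fun _ : FA => achar (ξ0 * x)) ξ0) hev.symm

lemma measurable_achar_mul (x : FA) : Measurable (fun ξ : FA => achar (ξ * x)) :=
  (continuous_achar_mul x).measurable

end CharPart

section SubgroupPart

lemma anorm_add_eq {a u : FA} (h : anorm u < anorm a) : anorm (a + u) = anorm a := by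
  have hup : anorm (a + u) ≤ anorm a := by
    refine le_trans (anorm_add_le a u) ?_
    rw [max_eq_left h.le]
  have hlow : anorm a ≤ anorm (a + u) := by
    have heq : a = (a + u) + (-u) := by ring
    have h2 : anorm a ≤ max (anorm (a+u)) (anorm u) := by
      calc anorm a = anorm ((a+u) + (-u)) := by rw [← heq]
        _ ≤ max (anorm (a+u)) (anorm (-u)) := anorm_add_le _ _
        _ = max (anorm (a+u)) (anorm u) := by rw [anorm_neg]
    rcases max_cases (anorm (a+u)) (anorm u) with ⟨hm, _⟩ | ⟨hm, _⟩
    · rwa [hm] at h2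
    · rw [hm] at h2
      linarith
  exact le_antisymm hup hlow

lemma subgroup_integral (μ : Measure FA) [μ.IsAddLeftInvariant] (x : FA) {A : Set FA}
    (hAm : MeasurableSet A) (hadd : ∀ a b : FA, a ∈ A → b ∈ A → a + b ∈ A)
    (hneg : ∀ a : FA, a ∈ A → -a ∈ A) :
    (∫ ξ, A.indicator (fun ζ => achar (ζ * x)) ξ ∂μ).im = 0 ∧
      0 ≤ (∫ ξ, A.indicator (fun ζ => achar (ζ * x)) ξ ∂μ).re := by
  by_cases h1 : ∀ a ∈ A, achar (a * x) = 1
  · have heq : A.indicator (fun ζ => achar (ζ * x)) = A.indicator (fun _ => (1:ℂ)) :=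
      Set.indicator_congr fun ξ hξ => h1 ξ hξ
    rw [heq, MeasureTheory.integral_indicator_const (1:ℂ) hAm]
    constructor
    · simp
    · simp [ENNReal.toReal_nonneg]
  · push_neg at h1
    obtain ⟨a, haA, hane⟩ := h1
    have hshift : ∫ ξ, A.indicator (fun ζ => achar (ζ * x)) ξ ∂μ
        = ∫ ξ, A.indicator (fun ζ => achar (ζ * x)) (a + ξ) ∂μ :=
      (MeasureTheory.integral_add_left_eq_self
        (fun ξ => A.indicator (fun ζ => achar (ζ * x)) ξ) a).symm
    have hpt : ∀ ξ, A.indicator (fun ζ => achar (ζ * x)) (a + ξ)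
        = achar (a * x) * A.indicator (fun ζ => achar (ζ * x)) ξ := by
      intro ξ
      by_cases hξ : ξ ∈ A
      · have hmem : a + ξ ∈ A := hadd a ξ haA hξ
        rw [Set.indicator_of_mem hmem, Set.indicator_of_mem hξ]
        rw [show (a + ξ) * x = a * x + ξ * x from add_mul a ξ x, achar_add]
      · have hmem : a + ξ ∉ A := by
          intro hc
          have h3 := hadd (-a) (a + ξ) (hneg a haA) hc
          rw [neg_add_cancel_left] at h3
          exact hξ h3
        rw [Set.indicator_of_notMem hmem, Set.indicator_of_notMem hξ, mul_zero]
    have hkey : ∫ ξ, A.indicator (fun ζ => achar (ζ * x)) ξ ∂μ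
        = achar (a * x) * ∫ ξ, A.indicator (fun ζ => achar (ζ * x)) ξ ∂μ := by
      conv_lhs => rw [hshift]
      simp_rw [hpt]
      rw [MeasureTheory.integral_const_mul]
    have hzero : ∫ ξ, A.indicator (fun ζ => achar (ζ * x)) ξ ∂μ = 0 := by
      by_contra hne
      have h2 : (achar (a*x) - 1) * ∫ ξ, A.indicator (fun ζ => achar (ζ * x)) ξ ∂μ = 0 := by
        rw [sub_mul, one_mul, ← hkey, sub_self]
      rcases mul_eq_zero.mp h2 with h3 | h3
      · exact hane (by rwa [sub_eq_zero] at h3)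
      · exact hne h3
    rw [hzero]
    simp

lemma f_nonneg_aux (μ : Measure FA) [μ.IsAddLeftInvariant] (hone : μ unitBall = 1)
    (f : FA → ℝ) (hmono : ∀ ξ ζ : FA, anorm ξ ≤ anorm ζ → f ζ ≤ f ξ)
    (hint : Integrable f μ) : ∀ ξ : FA, 0 ≤ f ξ := by
  intro ξ0
  by_contra hneg
  push_neg at hneg
  obtain ⟨n0, hn0⟩ := pow_unbounded_of_one_lt (anorm ξ0) (one_lt_two : (1:ℝ) < 2)
  set t2 : Nat.Primes := ⟨2, Nat.prime_two⟩ with ht2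
  have hdelta_mem : ∀ k : ℕ, (Pi.single (M := fun p : Nat.Primes => ℚ_[p.1]) t2
      ((2:ℚ_[t2.1])^(-(k:ℤ)))) ∈ adeleSubring := by
    intro k
    show ∀ᶠ p : Nat.Primes in Filter.cofinite, _
    rw [Filter.eventually_cofinite]
    refine Set.Finite.subset (Set.finite_singleton t2) ?_
    intro p hp
    simp only [Set.mem_setOf_eq] at hp
    by_contra hne'
    apply hp
    rw [Pi.single_eq_of_ne (by simpa using hne')]
    simp
  set a : ℕ → FA := fun n => ⟨_, hdelta_mem (n0 + n + 1)⟩ with ha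
  have hnorm2 : ∀ k : ℕ, ‖(2:ℚ_[t2.1])^(-(k:ℤ))‖ = 2^k := by
    intro k
    rw [norm_zpow]
    have h2 : ‖(2:ℚ_[t2.1])‖ = ((2:ℝ))⁻¹ := by
      have h := Padic.norm_p (p := 2)
      have hc2 : ((2:ℕ) : ℚ_[2]) = (2 : ℚ_[2]) := by norm_cast
      rw [hc2] at h
      rw [h]
      norm_num
    rw [h2, inv_zpow, ← zpow_neg, neg_neg, zpow_natCast]
  have hcoord : ∀ n : ℕ, (a n).1 t2 = (2:ℚ_[t2.1])^(-((n0+n+1 : ℕ):ℤ)) := by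
    intro n
    exact Pi.single_eq_same (M := fun p : Nat.Primes => ℚ_[p.1]) t2 _
  have hcoord' : ∀ n : ℕ, ∀ q : Nat.Primes, q ≠ t2 → (a n).1 q = 0 := by
    intro n q hq
    exact Pi.single_eq_of_ne (M := fun p : Nat.Primes => ℚ_[p.1]) hq _
  have hanorm : ∀ n : ℕ, anorm (a n) = 2^(n0+n+1) := by
    intro n
    have hbig : ¬ ∀ p, ‖(a n).1 p‖ ≤ 1 := by
      push_neg
      refine ⟨t2, ?_⟩
      rw [hcoord n, hnorm2]
      have h1 : (2:ℝ)^1 ≤ 2^(n0+n+1) := pow_le_pow_right₀ one_le_two (by omega)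
      norm_num at h1
      linarith
    rw [anorm, if_neg hbig]
    refine le_antisymm (norm1_le fun p => ?_) ?_
    · by_cases hp : p = t2
      · subst hp
        rw [hcoord n, hnorm2]
      · rw [hcoord' n p hp]
        simp
        try positivity
    · have := le_norm1 (a n) t2
      rwa [hcoord n, hnorm2] at this
  have hanorm_gt : ∀ n : ℕ, anorm ξ0 < anorm (a n) := by
    intro n
    rw [hanorm n]
    refine lt_of_lt_of_le hn0 ?_
    exact pow_le_pow_right₀ one_le_two (by omega)
  set E : ℕ → Set FA := fun n => (fun y : FA => -(a n) + y) ⁻¹' unitBall with hE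
  have hEm : ∀ n, MeasurableSet (E n) := fun n =>
    (measurable_const_add (-(a n))) measurableSet_unitBall
  have hEmu : ∀ n, μ (E n) = 1 := by
    intro n
    rw [hE]
    rw [MeasureTheory.measure_preimage_add]
    exact hone
  have hEnorm : ∀ n, ∀ y ∈ E n, anorm y = anorm (a n) := by
    intro n y hy
    have hu : -(a n) + y ∈ unitBall := hy
    have hyeq : y = a n + (-(a n) + y) := by ring
    have hanu : anorm (-(a n) + y) < anorm (a n) := by
      refine lt_of_le_of_lt (anorm_le_half hu) ?_
      rw [hanorm n]
      have h1 : (2:ℝ)^1 ≤ 2^(n0+n+1) := pow_le_pow_right₀ one_le_two (by omega)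
      norm_num at h1
      linarith
    rw [hyeq]
    exact anorm_add_eq hanu
  have hdisj : Pairwise (Function.onFun Disjoint E) := by
    intro n m hnm
    rw [Function.onFun, Set.disjoint_left]
    intro y hyn hym
    have h1 := hEnorm n y hyn
    have h2 := hEnorm m y hym
    rw [hanorm n] at h1
    rw [hanorm m] at h2
    have : (2:ℝ)^(n0+n+1) = 2^(n0+m+1) := by rw [← h1, ← h2]
    have hinj : StrictMono (fun k : ℕ => (2:ℝ)^k) := fun s t hst =>
      pow_lt_pow_right₀ one_lt_two hst
    have := hinj.injective this
    omega
  have hflt : ∀ n, ∀ y ∈ E n, f y ≤ f ξ0 := by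
    intro n y hy
    refine hmono ξ0 y ?_
    rw [hEnorm n y hy]
    exact (hanorm_gt n).le
  set c : ℝ≥0∞ := ENNReal.ofReal (-f ξ0) with hc
  have hc0 : c ≠ 0 := by
    rw [hc]
    simp only [ne_eq, ENNReal.ofReal_eq_zero, not_le]
    linarith
  have hpt : ∀ y, Set.indicator (⋃ n, E n) (fun _ => c) y ≤ (‖f y‖₊ : ℝ≥0∞) := by
    intro y
    by_cases hy : y ∈ ⋃ n, E n
    · rw [Set.indicator_of_mem hy]
      obtain ⟨n, hn⟩ := Set.mem_iUnion.mp hy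
      have hfy : f y ≤ f ξ0 := hflt n y hn
      rw [hc, ← ENNReal.ofReal_coe_nnreal, coe_nnnorm]
      refine ENNReal.ofReal_le_ofReal ?_
      rw [Real.norm_eq_abs, abs_of_neg (by linarith)]
      linarith
    · rw [Set.indicator_of_notMem hy]
      exact zero_le
  have hfin : ∫⁻ y, (‖f y‖₊ : ℝ≥0∞) ∂μ < ⊤ := hint.2
  have hlow : ∫⁻ y, Set.indicator (⋃ n, E n) (fun _ => c) y ∂μ ≤ ∫⁻ y, (‖f y‖₊ : ℝ≥0∞) ∂μ :=
    MeasureTheory.lintegral_mono hpt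
  rw [MeasureTheory.lintegral_indicator (MeasurableSet.iUnion hEm)] at hlow
  simp only [MeasureTheory.lintegral_const, Measure.restrict_apply MeasurableSet.univ,
    Set.univ_inter] at hlow
  rw [MeasureTheory.measure_iUnion hdisj hEm] at hlow
  simp only [hEmu] at hlow
  rw [ENNReal.tsum_const_eq_top_of_ne_zero (by simp : (1:ℝ≥0∞) ≠ 0)] at hlow
  rw [ENNReal.mul_top hc0] at hlow
  rw [top_le_iff.mp hlow] at hfin
  exact lt_irrefl _ hfin

end SubgroupPart





end AdeleAux
end AuxProofs

open MeasureTheory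

/-- The inverse Fourier transform of an integrable, radial, non-increasing real-valued
function on `𝔸_f` is (real and) non-negative at every point. -/
theorem stmt_12 (μ : Measure FA) (hinv : μ.IsAddLeftInvariant) (hreg : μ.Regular)
    (hone : μ unitBall = 1)
    (f : FA → ℝ) (hmono : ∀ ξ ζ : FA, anorm ξ ≤ anorm ζ → f ζ ≤ f ξ)
    (hint : Integrable f μ) (x : FA) :
    (∫ ξ, achar (ξ * x) * (f ξ : ℂ) ∂μ).im = 0 ∧
    0 ≤ (∫ ξ, achar (ξ * x) * (f ξ : ℂ) ∂μ).re := by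
  classical
  haveI := hinv
  have hf0 : ∀ ξ : FA, 0 ≤ f ξ := AdeleAux.f_nonneg_aux μ hone f hmono hint
  set A : ℝ → Set FA := fun t => {ξ : FA | t ≤ f ξ} with hA
  have hAdown : ∀ t : ℝ, ∀ ξ ζ : FA, anorm ξ ≤ anorm ζ → ζ ∈ A t → ξ ∈ A t :=
    fun t ξ ζ h hζ => le_trans hζ (hmono ξ ζ h)
  have hAm : ∀ t, MeasurableSet (A t) := fun t =>
    AdeleAux.measurableSet_of_downClosed (hAdown t)
  have hAadd : ∀ t : ℝ, ∀ a b : FA, a ∈ A t → b ∈ A t → a + b ∈ A t := by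
    intro t a b ha hb
    rcases max_cases (anorm a) (anorm b) with ⟨hm, _⟩ | ⟨hm, _⟩
    · exact hAdown t (a+b) a (le_trans (AdeleAux.anorm_add_le a b) (le_of_eq hm)) ha
    · exact hAdown t (a+b) b (le_trans (AdeleAux.anorm_add_le a b) (le_of_eq hm)) hb
  have hAneg : ∀ t : ℝ, ∀ a : FA, a ∈ A t → -a ∈ A t := by
    intro t a ha
    refine hAdown t (-a) a ?_ ha
    rw [AdeleAux.anorm_neg]
  have hAfin : ∀ t : ℝ, 0 < t → μ (A t) < ⊤ := fun t ht => hint.measure_ge_lt_top ht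
  have hJ : ∀ t : ℝ, (∫ ξ, (A t).indicator (fun ζ => achar (ζ * x)) ξ ∂μ).im = 0 ∧
      0 ≤ (∫ ξ, (A t).indicator (fun ζ => achar (ζ * x)) ξ ∂μ).re :=
    fun t => AdeleAux.subgroup_integral μ x (hAm t) (hAadd t) (hAneg t)
  have hind_int : ∀ t : ℝ, 0 < t →
      Integrable ((A t).indicator (fun ζ => achar (ζ * x))) μ := by
    intro t ht
    refine MeasureTheory.IntegrableOn.integrable_indicator ?_ (hAm t)
    refine MeasureTheory.Measure.integrableOn_of_bounded (M := 1) (hAfin t ht).ne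
      (AdeleAux.measurable_achar_mul x).aestronglyMeasurable ?_
    refine Filter.Eventually.of_forall fun ξ => ?_
    rw [AdeleAux.achar_abs]
  set sfn : ℕ → FA → ℝ := fun n ξ => ∑ k ∈ Finset.range (n * 2^n),
    ((2:ℝ)^n)⁻¹ * (A (((k:ℝ)+1)/2^n)).indicator (fun _ => (1:ℝ)) ξ with hsfn
  have hval : ∀ n ξ, sfn n ξ
      = ((2:ℝ)^n)⁻¹ * ((min (n * 2^n) (Nat.floor ((2:ℝ)^n * f ξ)) : ℕ) : ℝ) := by
    intro n ξ
    have hpow : (0:ℝ) < 2^n := by positivity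
    rw [hsfn]
    show (∑ k ∈ Finset.range (n * 2^n),
      ((2:ℝ)^n)⁻¹ * (A (((k:ℝ)+1)/2^n)).indicator (fun _ => (1:ℝ)) ξ) = _
    rw [← Finset.mul_sum]
    congr 1
    have hcond : ∀ k : ℕ, ((A (((k:ℝ)+1)/2^n)).indicator (fun _ => (1:ℝ)) ξ)
        = if k < Nat.floor ((2:ℝ)^n * f ξ) then (1:ℝ) else 0 := by
      intro k
      by_cases hk : ((k:ℝ)+1)/2^n ≤ f ξ
      · have hkmem : ξ ∈ A (((k:ℝ)+1)/2^n) := hk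
        rw [Set.indicator_of_mem hkmem, if_pos ?_]
        have h1 : (k:ℝ)+1 ≤ 2^n * f ξ := by
          rw [div_le_iff₀ hpow] at hk
          linarith [hk]
        have h2 : k+1 ≤ Nat.floor ((2:ℝ)^n * f ξ) := Nat.le_floor (by push_cast; linarith)
        omega
      · have hkmem : ξ ∉ A (((k:ℝ)+1)/2^n) := hk
        rw [Set.indicator_of_notMem hkmem, if_neg ?_]
        intro hc
        apply hk
        have h1 : ((k+1 : ℕ):ℝ) ≤ 2^n * f ξ :=
          le_trans (Nat.cast_le.mpr (by omega : k+1 ≤ Nat.floor ((2:ℝ)^n * f ξ)))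
            (Nat.floor_le (mul_nonneg hpow.le (hf0 ξ)))
        rw [div_le_iff₀ hpow]
        push_cast at h1
        linarith
    simp_rw [hcond]
    rw [Finset.sum_boole]
    have hfilter : Finset.filter (fun k => k < Nat.floor ((2:ℝ)^n * f ξ))
        (Finset.range (n * 2^n)) = Finset.range (min (Nat.floor ((2:ℝ)^n * f ξ)) (n * 2^n)) := by
      ext k
      simp only [Finset.mem_filter, Finset.mem_range, lt_min_iff]
      omega
    rw [hfilter, Finset.card_range, min_comm]
  have hnn : ∀ n ξ, 0 ≤ sfn n ξ := by
    intro n ξ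
    rw [hval]
    positivity
  have hle : ∀ n ξ, sfn n ξ ≤ f ξ := by
    intro n ξ
    have hpow : (0:ℝ) < 2^n := by positivity
    rw [hval]
    have h1 : ((min (n * 2^n) (Nat.floor ((2:ℝ)^n * f ξ)) : ℕ) : ℝ)
        ≤ ((Nat.floor ((2:ℝ)^n * f ξ) : ℕ) : ℝ) := by
      exact_mod_cast min_le_right _ _
    have h2 : ((Nat.floor ((2:ℝ)^n * f ξ) : ℕ) : ℝ) ≤ 2^n * f ξ :=
      Nat.floor_le (mul_nonneg hpow.le (hf0 ξ))
    calc ((2:ℝ)^n)⁻¹ * _ ≤ ((2:ℝ)^n)⁻¹ * (2^n * f ξ) :=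
        mul_le_mul_of_nonneg_left (le_trans h1 h2) (by positivity)
      _ = f ξ := by field_simp
  have htend : ∀ ξ, Filter.Tendsto (fun n => sfn n ξ) Filter.atTop (nhds (f ξ)) := by
    intro ξ
    have h0 : Filter.Tendsto (fun n : ℕ => ((2:ℝ)^n)⁻¹) Filter.atTop (nhds 0) := by
      have := tendsto_pow_atTop_nhds_zero_of_lt_one (by norm_num : (0:ℝ) ≤ 2⁻¹)
        (by norm_num : (2:ℝ)⁻¹ < 1)
      simpa [inv_pow] using this
    have hlow : ∀ᶠ n : ℕ in Filter.atTop, f ξ - ((2:ℝ)^n)⁻¹ ≤ sfn n ξ := by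
      filter_upwards [Filter.eventually_ge_atTop (Nat.ceil (f ξ))] with n hn
      have hpow : (0:ℝ) < 2^n := by positivity
      have hfn : f ξ ≤ (n:ℝ) := le_trans (Nat.le_ceil _) (by exact_mod_cast hn)
      have hmineq : min (n * 2^n) (Nat.floor ((2:ℝ)^n * f ξ)) = Nat.floor ((2:ℝ)^n * f ξ) := by
        refine min_eq_right ?_
        have hcast : (2:ℝ)^n * f ξ ≤ (((n * 2^n : ℕ)) : ℝ) := by
          push_cast
          nlinarith
        have := Nat.floor_mono hcast
        rwa [Nat.floor_natCast] at this
      rw [hval, hmineq]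
      have hfl : (2:ℝ)^n * f ξ - 1 < ((Nat.floor ((2:ℝ)^n * f ξ) : ℕ) : ℝ) :=
        Nat.sub_one_lt_floor _
      have hineq : ((2:ℝ)^n)⁻¹ * ((2:ℝ)^n * f ξ - 1)
          ≤ ((2:ℝ)^n)⁻¹ * ((Nat.floor ((2:ℝ)^n * f ξ) : ℕ) : ℝ) :=
        mul_le_mul_of_nonneg_left hfl.le (by positivity)
      have heq2 : ((2:ℝ)^n)⁻¹ * ((2:ℝ)^n * f ξ - 1) = f ξ - ((2:ℝ)^n)⁻¹ := by
        field_simp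
      linarith
    refine tendsto_of_tendsto_of_tendsto_of_le_of_le' ?_ tendsto_const_nhds hlow
      (Filter.Eventually.of_forall fun n => hle n ξ)
    have : (fun n : ℕ => f ξ - ((2:ℝ)^n)⁻¹) = fun n => f ξ - ((2:ℝ)^n)⁻¹ := rfl
    have h2 := Filter.Tendsto.const_sub (f ξ) h0
    simpa using h2
  have hsfn_meas : ∀ n, Measurable (sfn n) := by
    intro n
    rw [hsfn]
    refine Finset.measurable_sum _ fun k _ => ?_
    exact (Measurable.indicator measurable_const (hAm _)).const_mul _
  set F : ℕ → FA → ℂ := fun n ξ => achar (ξ * x) * ((sfn n ξ : ℝ) : ℂ) with hF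
  have hFmeas : ∀ n, AEStronglyMeasurable (F n) μ := fun n =>
    ((AdeleAux.measurable_achar_mul x).mul
      (Complex.measurable_ofReal.comp (hsfn_meas n))).aestronglyMeasurable
  have hbound : ∀ n, ∀ᵐ ξ ∂μ, ‖F n ξ‖ ≤ f ξ := by
    intro n
    refine Filter.Eventually.of_forall fun ξ => ?_
    rw [hF]
    show ‖achar (ξ * x) * ((sfn n ξ : ℝ) : ℂ)‖ ≤ f ξ
    rw [norm_mul, AdeleAux.achar_abs, one_mul, Complex.norm_real,
      Real.norm_eq_abs, abs_of_nonneg (hnn n ξ)]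
    exact hle n ξ
  have hlim : ∀ᵐ ξ ∂μ, Filter.Tendsto (fun n => F n ξ) Filter.atTop
      (nhds (achar (ξ * x) * (f ξ : ℂ))) := by
    refine Filter.Eventually.of_forall fun ξ => ?_
    have h1 : Filter.Tendsto (fun n => ((sfn n ξ : ℝ) : ℂ)) Filter.atTop (nhds ((f ξ : ℝ) : ℂ)) :=
      (Complex.continuous_ofReal.tendsto (f ξ)).comp (htend ξ)
    exact h1.const_mul _
  have hDCT := MeasureTheory.tendsto_integral_of_dominated_convergence
    (F := F) (f := fun ξ => achar (ξ * x) * (f ξ : ℂ)) f hFmeas hint hbound hlim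
  have hIntn : ∀ n, ∫ ξ, F n ξ ∂μ = ∑ k ∈ Finset.range (n * 2^n),
      (Complex.ofReal (((2:ℝ)^n)⁻¹)) * ∫ ξ, (A (((k:ℝ)+1)/2^n)).indicator (fun ζ => achar (ζ * x)) ξ ∂μ := by
    intro n
    have hptw : ∀ ξ, F n ξ = ∑ k ∈ Finset.range (n * 2^n),
        (Complex.ofReal (((2:ℝ)^n)⁻¹)) * (A (((k:ℝ)+1)/2^n)).indicator (fun ζ => achar (ζ * x)) ξ := by
      intro ξ
      rw [hF]
      show achar (ξ * x) * ((sfn n ξ : ℝ) : ℂ) = _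
      rw [hsfn]
      show achar (ξ * x) * (((∑ k ∈ Finset.range (n * 2^n),
        ((2:ℝ)^n)⁻¹ * (A (((k:ℝ)+1)/2^n)).indicator (fun _ => (1:ℝ)) ξ : ℝ)) : ℂ) = _
      push_cast
      rw [Finset.mul_sum]
      refine Finset.sum_congr rfl fun k _ => ?_
      by_cases hk : ξ ∈ A (((k:ℝ)+1)/2^n)
      · rw [Set.indicator_of_mem hk, Set.indicator_of_mem hk]
        push_cast
        ring
      · rw [Set.indicator_of_notMem hk, Set.indicator_of_notMem hk]
        push_cast
        ring
    rw [MeasureTheory.integral_congr_ae (Filter.Eventually.of_forall hptw)]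
    rw [MeasureTheory.integral_finset_sum]
    · refine Finset.sum_congr rfl fun k _ => ?_
      rw [MeasureTheory.integral_const_mul]
    · intro k _
      exact (hind_int (((k:ℝ)+1)/2^n) (by positivity)).const_mul _
  have him_n : ∀ n, (∫ ξ, F n ξ ∂μ).im = 0 := by
    intro n
    rw [hIntn n, Complex.im_sum]
    refine Finset.sum_eq_zero fun k _ => ?_
    rw [Complex.mul_im]
    rw [(hJ (((k:ℝ)+1)/2^n)).1]
    simp only [Complex.ofReal_im, Complex.ofReal_re, mul_zero, zero_mul, zero_add, add_zero]
  have hre_n : ∀ n, 0 ≤ (∫ ξ, F n ξ ∂μ).re := by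
    intro n
    rw [hIntn n, Complex.re_sum]
    refine Finset.sum_nonneg fun k _ => ?_
    rw [Complex.mul_re, (hJ (((k:ℝ)+1)/2^n)).1]
    simp only [Complex.ofReal_re, Complex.ofReal_im, mul_zero, zero_mul, sub_zero]
    exact mul_nonneg (by positivity) (hJ (((k:ℝ)+1)/2^n)).2
  have him := (Complex.continuous_im.tendsto _).comp hDCT
  have hre := (Complex.continuous_re.tendsto _).comp hDCT
  constructor
  · have h1 : Filter.Tendsto (fun n => (∫ ξ, F n ξ ∂μ).im) Filter.atTop
        (nhds ((∫ ξ, achar (ξ * x) * (f ξ : ℂ) ∂μ).im)) := him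
    have h2 : Filter.Tendsto (fun n => (∫ ξ, F n ξ ∂μ).im) Filter.atTop (nhds (0:ℝ)) := by
      have heq : (fun n => (∫ ξ, F n ξ ∂μ).im) = fun _ => (0:ℝ) := funext him_n
      rw [heq]
      exact tendsto_const_nhds
    exact tendsto_nhds_unique h1 h2
  · have h1 : Filter.Tendsto (fun n => (∫ ξ, F n ξ ∂μ).re) Filter.atTop
        (nhds ((∫ ξ, achar (ξ * x) * (f ξ : ℂ) ∂μ).re)) := hre
    exact ge_of_tendsto h1 (Filter.Eventually.of_forall hre_n)
end
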